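/- arXiv:1012.3244 — 4 statements merged into one kernel-verified Lean document; each statement's English description precedes it below -/
import Mathlib

section
/- Let G ≅ ℤ^k ⊕ ℤ_{n_1} ⊕ … ⊕ ℤ_{n_t} with n_{i+1} ∣ n_i, presented as F/R as below, and let 1 ≤ c_2 ≤ c_1 ≤ 2c_2. Then [γ_{c_1+1}(F), γ_{c_2+1}(F)] ≡ ⟨A⟩ (mod H), i.e. [γ_{c_1+1}(F), γ_{c_2+1}(F)]·H = ⟨A⟩·H, where A = {[β,α] : β, α basic commutators on X = {x_1,…,x_{k+t}} with β > α, wt(β) = c_1+1, wt(α) = c_2+1}. -/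
namespace PaperFormal

open Subgroup
open scoped commutatorElement

/-- The set of values of the words in `V` in the group `G`. -/
def wordValues {α : Type*} (V : Set (FreeGroup α)) (G : Type*) [Group G] : Set G :=
  {g | ∃ v ∈ V, ∃ f : α → G, FreeGroup.lift f v = g}

/-- The verbal subgroup `V(G)` of `G` with respect to a set of words `V`. -/
def verbal {α : Type*} (V : Set (FreeGroup α)) (G : Type*) [Group G] : Subgroup G :=
  Subgroup.closure (wordValues V G)

/-- The marginal set `V*(G)`: the set of `g ∈ G` such that replacing any single entry
`gᵢ` by `gᵢ * g` does not change the value of any word `v ∈ V`. -/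
def marginalSet {α : Type*} [DecidableEq α] (V : Set (FreeGroup α)) (G : Type*) [Group G] :
    Set G :=
  {g | ∀ v ∈ V, ∀ f : α → G, ∀ i : α,
    FreeGroup.lift (Function.update f i (f i * g)) v = FreeGroup.lift f v}

/-- The subgroup `[K V* G]`. -/
def KVstar {α : Type*} [DecidableEq α] (V : Set (FreeGroup α)) {G : Type*} [Group G]
    (K : Subgroup G) : Subgroup G :=
  Subgroup.closure {x | ∃ v ∈ V, ∃ f : α → G, ∃ i : α, ∃ r ∈ K,
    x = FreeGroup.lift (Function.update f i (f i * r)) v * (FreeGroup.lift f v)⁻¹}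

/-- The quotient group `A/B`, for subgroups `A B` of an ambient group (mathematically
meaningful when `B` is a subgroup of `A` normalized by `A`; we take the normal closure of
`B ∩ A` inside `A`, which equals `B` in that case). -/
abbrev quotBy {G : Type*} [Group G] (A B : Subgroup G) : Type _ :=
  ↥A ⧸ Subgroup.normalClosure ((B.subgroupOf A : Subgroup ↥A) : Set ↥A)

/-- The canonical projection onto `quotBy A B`. -/
def quotByMk {G : Type*} [Group G] {A : Subgroup G} (B : Subgroup G) (a : ↥A) :
    quotBy A B := QuotientGroup.mk a

/-- The natural homomorphism `A/B → A'/B'` when `A ≤ A'` and `B ≤ B'`. -/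
def quotByHom {G : Type*} [Group G] {A A' B B' : Subgroup G} (hA : A ≤ A') (hB : B ≤ B') :
    quotBy A B →* quotBy A' B' :=
  QuotientGroup.lift _ ((QuotientGroup.mk' _).comp (Subgroup.inclusion hA)) (by
    intro x hx
    have : x ∈ ((QuotientGroup.mk' (Subgroup.normalClosure
        ((B'.subgroupOf A' : Subgroup ↥A') : Set ↥A'))).comp (Subgroup.inclusion hA)).ker := by
      refine Subgroup.normalClosure_le_normal ?_ hx
      intro y hy
      simp only [SetLike.mem_coe, Subgroup.mem_subgroupOf] at hy
      simp only [SetLike.mem_coe, MonoidHom.mem_ker, MonoidHom.comp_apply,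
        QuotientGroup.mk'_apply]
      rw [QuotientGroup.eq_one_iff]
      refine Subgroup.subset_normalClosure ?_
      simp only [SetLike.mem_coe, Subgroup.mem_subgroupOf, Subgroup.coe_inclusion]
      exact hB hy
    exact this)

/-- The Baer invariant `𝔙M(G) = (R ∩ V(F))/[R V* F]` of `G ≅ F/R` with respect to the
set of words `V`. -/
abbrev BaerInv {α : Type*} [DecidableEq α] (V : Set (FreeGroup α)) {F : Type*} [Group F]
    (R : Subgroup F) : Type _ :=
  quotBy (R ⊓ verbal V F) (KVstar V R)

/-- The natural homomorphism `𝔙M(F/R) → 𝔙M(F/S)` for `R ≤ S`. -/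
def baerMap {α : Type*} [DecidableEq α] (V : Set (FreeGroup α)) {F : Type*} [Group F]
    {R S : Subgroup F} (h : R ≤ S) : BaerInv V R →* BaerInv V S :=
  quotByHom (inf_le_inf_right _ h) (Subgroup.closure_mono (by
    rintro x ⟨v, hv, f, i, r, hr, rfl⟩
    exact ⟨v, hv, f, i, r, h hr, rfl⟩))

/-- A group `G` is `V`-capable if `G ≅ E/V*(E)` for some group `E`; equivalently there
is a surjection `E → G` whose kernel is exactly the marginal subgroup `V*(E)`. -/
def VCapable {α : Type*} [DecidableEq α] (V : Set (FreeGroup α)) (G : Type*) [Group G] : Prop :=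
  ∃ (E : Type*) (_ : Group E) (φ : E →* G),
    Function.Surjective φ ∧ (φ.ker : Set E) = marginalSet V E

/-- A group `G` is capable if `G ≅ E/Z(E)` for some group `E`. -/
def Capable (G : Type*) [Group G] : Prop :=
  ∃ (E : Type*) (_ : Group E) (φ : E →* G),
    Function.Surjective φ ∧ φ.ker = Subgroup.center E

/-- A group `G` is `𝔑_c`-capable if `G ≅ E/Z_c(E)` for some group `E`. -/
def NCapable (c : ℕ) (G : Type*) [Group G] : Prop :=
  ∃ (E : Type*) (_ : Group E) (φ : E →* G),
    Function.Surjective φ ∧ φ.ker = Subgroup.upperCentralSeries E c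

/-- The nilpotency word `[…[[x₀,x₁],x₂],…,x_c]` defining the variety `𝔑_c`. -/
def nilpWord : ℕ → FreeGroup ℕ
  | 0 => FreeGroup.of 0
  | c + 1 => ⁅nilpWord c, FreeGroup.of (c + 1)⁆

/-- The outer commutator word `[[…[x₁,x₂],…,x_{c₁+1}], […[y₁,y₂],…,y_{c₂+1}]]`
(in `c₁+c₂+2` distinct variables) defining the variety `[𝔑_{c₁},𝔑_{c₂}]`. -/
def outerWord (c₁ c₂ : ℕ) : FreeGroup ℕ :=
  ⁅nilpWord c₁, FreeGroup.map (fun i => i + (c₁ + 1)) (nilpWord c₂)⁆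

/-- The solvability word `δ_ℓ` (on `2^ℓ` distinct variables) defining the variety `𝔖_ℓ`. -/
def deltaWord : ℕ → FreeGroup ℕ
  | 0 => FreeGroup.of 0
  | ℓ + 1 => ⁅deltaWord ℓ, FreeGroup.map (fun i => i + 2 ^ ℓ) (deltaWord ℓ)⁆

/-- `[R, F, F, …, F]` with `c` occurrences of `F`. -/
def iterBracket {G : Type*} [Group G] (R : Subgroup G) : ℕ → Subgroup G
  | 0 => R
  | c + 1 => ⁅iterBracket R c, (⊤ : Subgroup G)⁆

/-- Formal commutators on a set `X` of generators. -/
inductive FC (X : Type*) : Type _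
  | of : X → FC X
  | comm : FC X → FC X → FC X

namespace FC

/-- The weight of a formal commutator. -/
def wt {X : Type*} : FC X → ℕ
  | .of _ => 1
  | .comm a b => wt a + wt b

/-- The value of a formal commutator in the free group on `X`. -/
def val {X : Type*} : FC X → FreeGroup X
  | .of x => FreeGroup.of x
  | .comm a b => ⁅val a, val b⁆

/-- Whether the generator `x` occurs in a formal commutator. -/
def occurs {X : Type*} (x : X) : FC X → Prop
  | .of y => x = y
  | .comm a b => occurs x a ∨ occurs x b

/-- The standard ordering of (basic) commutators: first by weight, commutators of the
same weight being compared lexicographically in their two components. -/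
def cmp {X : Type*} [LinearOrder X] : FC X → FC X → Ordering
  | .of x, .of y => compare x y
  | .of x, .comm a b => (compare (wt (FC.of x)) (wt (FC.comm a b))).then .lt
  | .comm a b, .of y => (compare (wt (FC.comm a b)) (wt (FC.of y))).then .gt
  | .comm a b, .comm c d =>
      (compare (wt (FC.comm a b)) (wt (FC.comm c d))).then ((cmp a c).then (cmp b d))

/-- Basic commutators on a totally ordered set `X`: elements of `X` are basic of weight
one; `[cᵢ,cⱼ]` is basic provided `cᵢ, cⱼ` are basic, `cᵢ > cⱼ`, and if `cᵢ = [c_s,c_t]`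
then `cⱼ ≥ c_t`. -/
inductive IsBasic {X : Type*} [LinearOrder X] : FC X → Prop
  | of (x : X) : IsBasic (.of x)
  | comm {ci cj : FC X} : IsBasic ci → IsBasic cj → cmp cj ci = .lt →
      (∀ cs ct : FC X, ci = .comm cs ct → cmp cj ct ≠ .lt) → IsBasic (.comm ci cj)

end FC

/-- `Q` is a free abelian group with basis the subset `s ⊆ Q`. -/
def IsFreeAbelianWithBasis (Q : Type*) [Group Q] (s : Set Q) : Prop :=
  ∃ e : Q ≃* Multiplicative (FreeAbelianGroup s),
    ∀ (q : Q) (h : q ∈ s), e q = Multiplicative.ofAdd (FreeAbelianGroup.of (⟨q, h⟩ : s))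

/-- The Witt function `χ_n(d) = (1/n) ∑_{m ∣ n} μ(m) d^{n/m}`. -/
def chi (n d : ℕ) : ℕ :=
  ((∑ m ∈ n.divisors, (ArithmeticFunction.moebius m) * (d : ℤ) ^ (n / m)) / (n : ℤ)).toNat


/-! Setup for the free presentation of `G ≅ ℤ^k ⊕ ℤ_{n 0} ⊕ ⋯ ⊕ ℤ_{n (t-1)}`:
`F` is the free group on `x_0, …, x_{k+t-1}` and `R` is the (normal) subgroup of `F`
generated by `γ₂(F)` together with the elements `x_{k+i} ^ (n i)`. -/

/-- The index of the generator `x_{k+i}`. -/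
def xIdx (k t : ℕ) (i : Fin t) : Fin (k + t) := ⟨k + i, Nat.add_lt_add_left i.isLt k⟩

/-- The generator `x_{k+i}` of the free group `F`. -/
def xGen (k t : ℕ) (i : Fin t) : FreeGroup (Fin (k + t)) := FreeGroup.of (xIdx k t i)

/-- The subgroup `R` of `F`, generated by `γ₂(F)` and the `x_{k+i} ^ (n i)`; it is
automatically normal since it contains the commutator subgroup. -/
def Rsub (k t : ℕ) (n : Fin t → ℕ) : Subgroup (FreeGroup (Fin (k + t))) :=
  Subgroup.lowerCentralSeries (⊤ : Subgroup (FreeGroup (Fin (k + t)))) 1 ⊔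
    Subgroup.closure {g | ∃ i : Fin t, g = xGen k t i ^ n i}

/-- The cyclic subgroup `R_i = ⟨x_{k+i} ^ (n i)⟩`. -/
def Rcyc (k t : ℕ) (n : Fin t → ℕ) (i : Fin t) : Subgroup (FreeGroup (Fin (k + t))) :=
  Subgroup.closure {xGen k t i ^ n i}

/-- The subgroup `[γ_{c₁+1}(F), γ_{c₂+1}(F)]` (note `γ_{c+1}(F)` is
`lowerCentralSeries F c` in Mathlib's indexing). -/
def gammaComm (k t c₁ c₂ : ℕ) : Subgroup (FreeGroup (Fin (k + t))) :=
  ⁅Subgroup.lowerCentralSeries (⊤ : Subgroup (FreeGroup (Fin (k + t)))) c₁,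
   Subgroup.lowerCentralSeries (⊤ : Subgroup (FreeGroup (Fin (k + t)))) c₂⁆

/-- The product `[R, _{c₁}F, γ_{c₂+1}(F)]·[R, _{c₂}F, γ_{c₁+1}(F)]` (a product of two
normal subgroups, hence equal to their join). -/
def Psub (k t : ℕ) (n : Fin t → ℕ) (c₁ c₂ : ℕ) : Subgroup (FreeGroup (Fin (k + t))) :=
  ⁅iterBracket (Rsub k t n) c₁, Subgroup.lowerCentralSeries (⊤ : Subgroup (FreeGroup (Fin (k + t)))) c₂⁆ ⊔
  ⁅iterBracket (Rsub k t n) c₂, Subgroup.lowerCentralSeries (⊤ : Subgroup (FreeGroup (Fin (k + t)))) c₁⁆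

/-- `H = ([R, _{c₁}F, γ_{c₂+1}(F)]·[R, _{c₂}F, γ_{c₁+1}(F)]) ∩ γ_{c₁+c₂+3}(F)`. -/
def Hsub (k t : ℕ) (n : Fin t → ℕ) (c₁ c₂ : ℕ) : Subgroup (FreeGroup (Fin (k + t))) :=
  Psub k t n c₁ c₂ ⊓ Subgroup.lowerCentralSeries (⊤ : Subgroup (FreeGroup (Fin (k + t)))) (c₁ + c₂ + 2)

/-- The set `A` of commutators `[β,α]` of basic commutators `β > α` of weights
`c₁+1` and `c₂+1` respectively. -/
def Aset (k t c₁ c₂ : ℕ) : Set (FreeGroup (Fin (k + t))) :=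
  {g | ∃ β α : FC (Fin (k + t)), β.IsBasic ∧ α.IsBasic ∧ β.wt = c₁ + 1 ∧ α.wt = c₂ + 1 ∧
    FC.cmp α β = .lt ∧ g = ⁅β.val, α.val⁆}


namespace FC
set_option linter.unusedSectionVars false
variable {X : Type*} [LinearOrder X]
lemma wt_pos (c : FC X) : 0 < c.wt := by
  induction c with
  | of x => simp [wt]
  | comm a b iha ihb => simp only [wt]; omega

lemma eq_of_of_wt_eq_one {c : FC X} (h : c.wt = 1) : ∃ x, c = of x := by
  cases c with
  | of x => exact ⟨x, rfl⟩
  | comm a b =>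
    have := wt_pos a; have := wt_pos b
    simp only [wt] at h; omega

lemma two_le_wt_comm (a b : FC X) : 2 ≤ (comm a b).wt := by
  have := wt_pos a; have := wt_pos b; simp only [wt]; omega

lemma wt_of (x : X) : (of x : FC X).wt = 1 := rfl

lemma wt_comm (a b : FC X) : (comm a b).wt = a.wt + b.wt := rfl

private lemma eq_then (p : Ordering) : Ordering.eq.then p = p := rfl

private lemma then_ne {o p : Ordering} (h : o ≠ .eq) : o.then p = o := by
  cases o with
  | eq => exact absurd rfl h
  | lt => rfl
  | gt => rfl

private lemma compare_swap'' {α : Type*} [LinearOrder α] (m n : α) :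
    (compare m n).swap = compare n m := by
  rcases lt_trichotomy m n with h | h | h
  · rw [compare_lt_iff_lt.mpr h, compare_gt_iff_gt.mpr h]; rfl
  · rw [compare_eq_iff_eq.mpr h, compare_eq_iff_eq.mpr h.symm]; rfl
  · rw [compare_gt_iff_gt.mpr h, compare_lt_iff_lt.mpr h]; rfl

lemma cmp_of_wt_lt {a b : FC X} (h : a.wt < b.wt) : cmp a b = .lt := by
  have hc : compare a.wt b.wt = .lt := compare_lt_iff_lt.mpr h
  cases a with
  | of x =>
    cases b with
    | of y => simp only [wt] at h; omega
    | comm c d => show (compare (wt (of x)) (wt (comm c d))).then .lt = .lt; rw [hc]; rfl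
  | comm c d =>
    cases b with
    | of y => show (compare (wt (comm c d)) (wt (of y))).then .gt = .lt; rw [hc]; rfl
    | comm e f =>
      show (compare (wt (comm c d)) (wt (comm e f))).then _ = .lt; rw [hc]; rfl

lemma wt_le_of_cmp_lt {a b : FC X} (h : cmp a b = .lt) : a.wt ≤ b.wt := by
  by_contra hlt
  push_neg at hlt
  have hc : compare a.wt b.wt = .gt := compare_gt_iff_gt.mpr hlt
  cases a with
  | of x =>
    cases b with
    | of y => simp only [wt] at hlt; omega
    | comm c d =>
      have : (compare (wt (of x)) (wt (comm c d))).then .lt = .lt := h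
      rw [hc] at this; exact absurd this (by decide)
  | comm c d =>
    cases b with
    | of y =>
      have : (compare (wt (comm c d)) (wt (of y))).then .gt = .lt := h
      rw [hc] at this; exact absurd this (by decide)
    | comm e f =>
      have : (compare (wt (comm c d)) (wt (comm e f))).then ((cmp c e).then (cmp d f)) = .lt := h
      rw [hc] at this; exact absurd this (by simp [Ordering.then])

lemma cmp_self (a : FC X) : cmp a a = .eq := by
  induction a with
  | of x => show compare x x = .eq; exact compare_eq_iff_eq.mpr rfl
  | comm a b iha ihb =>
    show (compare _ _).then ((cmp a a).then (cmp b b)) = .eq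
    rw [compare_eq_iff_eq.mpr rfl, iha, ihb]; rfl

private lemma then_eq_eq {o p : Ordering} (h : o.then p = .eq) : o = .eq ∧ p = .eq := by
  cases o <;> simp_all [Ordering.then]

lemma eq_of_cmp_eq : ∀ {a b : FC X}, cmp a b = .eq → a = b := by
  intro a
  induction a with
  | of x =>
    intro b h
    cases b with
    | of y => exact congrArg of (compare_eq_iff_eq.mp h)
    | comm c d =>
      have : ((compare (wt (of x)) (wt (comm c d))).then .lt) = .eq := h
      obtain ⟨-, h2⟩ := then_eq_eq this
      exact absurd h2 (by decide)
  | comm c d ihc ihd =>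
    intro b h
    cases b with
    | of y =>
      have : ((compare (wt (comm c d)) (wt (of y))).then .gt) = .eq := h
      obtain ⟨-, h2⟩ := then_eq_eq this
      exact absurd h2 (by decide)
    | comm e f =>
      have : ((compare (wt (comm c d)) (wt (comm e f))).then ((cmp c e).then (cmp d f))) = .eq := h
      obtain ⟨-, h2⟩ := then_eq_eq this
      obtain ⟨h3, h4⟩ := then_eq_eq h2
      rw [ihc h3, ihd h4]

lemma cmp_swap (a : FC X) : ∀ b : FC X, (cmp a b).swap = cmp b a := by
  induction a with
  | of x =>
    intro b
    cases b with
    | of y => exact compare_swap'' x y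
    | comm c d =>
      show ((compare (wt (of x)) (wt (comm c d))).then .lt).swap = _
      rw [Ordering.swap_then, compare_swap'']; rfl
  | comm c d ihc ihd =>
    intro b
    cases b with
    | of y =>
      show ((compare (wt (comm c d)) (wt (of y))).then .gt).swap = _
      rw [Ordering.swap_then, compare_swap'']; rfl
    | comm e f =>
      show ((compare (wt (comm c d)) (wt (comm e f))).then ((cmp c e).then (cmp d f))).swap = _
      rw [Ordering.swap_then, compare_swap'', Ordering.swap_then, ihc, ihd]; rfl

lemma cmp_lt_of_gt {a b : FC X} (h : cmp a b = .gt) : cmp b a = .lt := by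
  rw [← cmp_swap a b, h]; rfl

lemma cmp_gt_of_lt {a b : FC X} (h : cmp a b = .lt) : cmp b a = .gt := by
  rw [← cmp_swap a b, h]; rfl

lemma cmp_trans : ∀ {a b c : FC X}, cmp a b = .lt → cmp b c = .lt → cmp a c = .lt := by
  suffices H : ∀ n : ℕ, ∀ a b c : FC X, a.wt + b.wt + c.wt ≤ n →
      cmp a b = .lt → cmp b c = .lt → cmp a c = .lt by
    intro a b c h1 h2; exact H _ a b c le_rfl h1 h2
  intro n
  induction n with
  | zero => intro a b c h _ _; have := wt_pos a; omega
  | succ n IH =>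
    intro a b c hn h1 h2
    have hab := wt_le_of_cmp_lt h1
    have hbc := wt_le_of_cmp_lt h2
    rcases lt_or_eq_of_le (le_trans hab hbc) with hlt | heq
    · exact cmp_of_wt_lt hlt
    · have hwab : a.wt = b.wt := by omega
      have hwbc : b.wt = c.wt := by omega
      cases a with
      | of x =>
        obtain ⟨y, rfl⟩ := eq_of_of_wt_eq_one (show b.wt = 1 by rw [← hwab]; rfl)
        obtain ⟨z, rfl⟩ := eq_of_of_wt_eq_one (show c.wt = 1 by rw [← hwbc, ← hwab]; rfl)
        have hxy : x < y := compare_lt_iff_lt.mp h1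
        have hyz : y < z := compare_lt_iff_lt.mp h2
        exact compare_lt_iff_lt.mpr (hxy.trans hyz)
      | comm a1 a2 =>
        have h2le := two_le_wt_comm a1 a2
        cases b with
        | of y => rw [wt_of] at hwab; omega
        | comm b1 b2 =>
          cases c with
          | of z => rw [wt_of] at hwbc; rw [wt_comm] at h2le hwab; omega
          | comm c1 c2 =>
            have e1 : ((compare (comm a1 a2).wt (comm b1 b2).wt).then
                ((cmp a1 b1).then (cmp a2 b2))) = .lt := h1
            have e2 : ((compare (comm b1 b2).wt (comm c1 c2).wt).then
                ((cmp b1 c1).then (cmp b2 c2))) = .lt := h2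
            rw [compare_eq_iff_eq.mpr hwab, eq_then] at e1
            rw [compare_eq_iff_eq.mpr hwbc, eq_then] at e2
            show ((compare (comm a1 a2).wt (comm c1 c2).wt).then
                ((cmp a1 c1).then (cmp a2 c2))) = .lt
            rw [compare_eq_iff_eq.mpr (hwab.trans hwbc), eq_then]
            rw [wt_comm, wt_comm, wt_comm] at hn
            rcases Ordering.then_eq_lt.mp e1 with hl1 | ⟨he1, hl1'⟩ <;>
              rcases Ordering.then_eq_lt.mp e2 with hl2 | ⟨he2, hl2'⟩
            · have : cmp a1 c1 = .lt := by
                apply IH a1 b1 c1 _ hl1 hl2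
                have := wt_pos a2; have := wt_pos b2; have := wt_pos c2
                omega
              exact Ordering.then_eq_lt.mpr (Or.inl this)
            · obtain rfl := eq_of_cmp_eq he2
              exact Ordering.then_eq_lt.mpr (Or.inl hl1)
            · obtain rfl := eq_of_cmp_eq he1
              exact Ordering.then_eq_lt.mpr (Or.inl hl2)
            · obtain rfl := eq_of_cmp_eq he1
              obtain rfl := eq_of_cmp_eq he2
              have : cmp a2 c2 = .lt := by
                apply IH a2 b2 c2 _ hl1' hl2'
                have := wt_pos a1
                omega
              exact Ordering.then_eq_lt.mpr (Or.inr ⟨cmp_self a1, this⟩)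




variable {X : Type*} [LinearOrder X]
variable (X) in
noncomputable def FCex [Fintype X] : ℕ → List (FC X)
  | 0 => []
  | 1 => Finset.univ.toList.map FC.of
  | n+2 => (List.range (n+1)).attach.flatMap fun i =>
      ((FCex (i.1+1)) ×ˢ (FCex (n+1-i.1))).map fun p => FC.comm p.1 p.2
  decreasing_by
  · have := i.2; simp only [List.mem_range] at this; omega
  · omega

lemma FCex_one [Fintype X] : FCex X 1 = Finset.univ.toList.map FC.of := by
  rw [FCex]

lemma FCex_two [Fintype X] (n : ℕ) : FCex X (n+2) = (List.range (n+1)).attach.flatMap fun i =>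
      ((FCex X (i.1+1)) ×ˢ (FCex X (n+1-i.1))).map fun p => FC.comm p.1 p.2 := by
  rw [FCex]

lemma mem_FCex [Fintype X] : ∀ c : FC X, c ∈ FCex X c.wt := by
  intro c
  induction c with
  | of x =>
    show _ ∈ FCex X 1
    rw [FCex_one]
    simp only [List.mem_map]
    exact ⟨x, by simp, rfl⟩
  | comm a b iha ihb =>
    have ha := wt_pos a; have hb := wt_pos b
    have hwt : (comm a b).wt = (a.wt + b.wt - 2) + 2 := by
      show a.wt + b.wt = _; omega
    rw [hwt, FCex_two]
    simp only [List.mem_flatMap]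
    refine ⟨⟨a.wt - 1, by simp only [List.mem_range]; omega⟩, List.mem_attach _ _, ?_⟩
    simp only [List.mem_map]
    refine ⟨(a, b), ?_, rfl⟩
    rw [List.mem_product]
    constructor
    · have h1 : a.wt - 1 + 1 = a.wt := by omega
      rw [h1]; exact iha
    · have h2 : a.wt + b.wt - 2 + 1 - (a.wt - 1) = b.wt := by omega
      rw [h2]; exact ihb

lemma countP_le_countP {α : Type*} {p q : α → Bool} :
    ∀ {l : List α}, (∀ x ∈ l, p x → q x) → l.countP p ≤ l.countP q := by
  intro l
  induction l with
  | nil => simp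
  | cons y l ih =>
    intro h
    rw [List.countP_cons, List.countP_cons]
    have h1 := ih fun x hx => h x (List.mem_cons_of_mem _ hx)
    have h2 := h y (List.mem_cons_self)
    by_cases hp : p y
    · simp [hp, h2 hp]; omega
    · simp [hp]; omega

lemma countP_lt_countP {α : Type*} {p q : α → Bool} :
    ∀ {l : List α}, (∀ x ∈ l, p x → q x) →
    ∀ {x}, x ∈ l → q x → ¬ p x → l.countP p < l.countP q := by
  intro l
  induction l with
  | nil => simp
  | cons y l ih =>
    intro hpq x hx hq hp
    rw [List.countP_cons, List.countP_cons]
    rcases List.mem_cons.mp hx with rfl | hx'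
    · have h1 := countP_le_countP (p := p) (q := q) fun z hz => hpq z (List.mem_cons_of_mem _ hz)
      simp [hp, hq]; omega
    · have h1 := ih (fun z hz => hpq z (List.mem_cons_of_mem _ hz)) hx' hq hp
      have h2 := hpq y (List.mem_cons_self)
      by_cases hpy : p y
      · simp [hpy, h2 hpy]; omega
      · simp [hpy]; omega



variable (X) in
noncomputable def mu [Fintype X] (w : ℕ) (a : FC X) : ℕ :=
  ((List.range w).flatMap (FCex X)).countP (fun b => FC.cmp a b == Ordering.lt)

lemma mu_lt [Fintype X] {w : ℕ} {a a' : FC X} (h : cmp a a' = .lt) (hw : a'.wt < w) :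
    mu X w a' < mu X w a := by
  apply countP_lt_countP
  · intro b hb hpb
    have hpb' : a'.cmp b = Ordering.lt := by
      revert hpb
      cases a'.cmp b <;> decide
    show (a.cmp b == Ordering.lt) = true
    rw [cmp_trans h hpb']; rfl
  · exact List.mem_flatMap.mpr ⟨a'.wt, List.mem_range.mpr hw, mem_FCex a'⟩
  · show (a.cmp a' == Ordering.lt) = true
    rw [h]; rfl
  · show ¬ ((a'.cmp a' == Ordering.lt) = true)
    rw [cmp_self]; decide


end FC

set_option linter.unusedSectionVars false
section GroupLemmas
variable {G : Type*} [Group G]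
lemma comm_mul_right (a b c : G) : ⁅a, b*c⁆ = ⁅a,b⁆ * (b * ⁅a,c⁆ * b⁻¹) := by group

lemma comm_mul_left (a b c : G) : ⁅a*b, c⁆ = (a * ⁅b,c⁆ * a⁻¹) * ⁅a,c⁆ := by group

lemma comm_inv_right (a b : G) : ⁅a, b⁻¹⁆ = b⁻¹ * ⁅a,b⁆⁻¹ * b := by group

lemma conj_eq_of_commute {g u : G} (h : Commute g u) : g * u * g⁻¹ = u := by
  rw [h.eq]; group

lemma comm_mul_right_eq {a b c : G} (h : ⁅a,c⁆ = 1) : ⁅a, b*c⁆ = ⁅a,b⁆ := by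
  rw [comm_mul_right, h]; group

lemma comm_mul_left_eq {a b c : G} (h : ⁅b,c⁆ = 1) : ⁅a*b, c⁆ = ⁅a,c⁆ := by
  rw [comm_mul_left, h]; group

lemma hall_witt (x y z : G) :
    ⁅⁅x,y⁆, y*z*y⁻¹⁆ * ⁅⁅y,z⁆, z*x*z⁻¹⁆ * ⁅⁅z,x⁆, x*y*x⁻¹⁆ = 1 := by
  simp only [commutatorElement_def]; group

lemma jacobi {x y z : G}
    (t1 : ⁅⁅x,y⁆,⁅y,z⁆⁆ = 1) (t2 : ⁅⁅y,z⁆,⁅z,x⁆⁆ = 1) (t3 : ⁅⁅z,x⁆,⁅x,y⁆⁆ = 1)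
    (c1 : Commute ⁅y,z⁆ ⁅⁅x,y⁆,z⁆) (c2 : Commute ⁅z,x⁆ ⁅⁅y,z⁆,x⁆)
    (c3 : Commute ⁅x,y⁆ ⁅⁅z,x⁆,y⁆) :
    ⁅⁅x,y⁆,z⁆ = ⁅y,⁅z,x⁆⁆ * ⁅x,⁅y,z⁆⁆ := by
  have e1 : y*z*y⁻¹ = ⁅y,z⁆ * z := by group
  have e2 : z*x*z⁻¹ = ⁅z,x⁆ * x := by group
  have e3 : x*y*x⁻¹ = ⁅x,y⁆ * y := by group
  have hw := hall_witt x y z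
  rw [e1, e2, e3] at hw
  rw [comm_mul_right, t1, comm_mul_right, t2, comm_mul_right, t3] at hw
  rw [conj_eq_of_commute c1, conj_eq_of_commute c2, conj_eq_of_commute c3] at hw
  simp only [one_mul] at hw
  have : ⁅⁅x,y⁆,z⁆ = (⁅⁅y,z⁆,x⁆ * ⁅⁅z,x⁆,y⁆)⁻¹ := by
    rw [eq_inv_iff_mul_eq_one, ← mul_assoc]; exact hw
  rw [this, mul_inv_rev, commutatorElement_inv, commutatorElement_inv]

/-- One-sided bilinear expansion of commutators with "central enough" values. -/
lemma comm_closure_mem {x : G} {S : Set G} {T : Subgroup G}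
    (hcen : ∀ h ∈ closure S, ∀ g ∈ closure S, Commute g ⁅x, h⁆)
    (hgen : ∀ s ∈ S, ⁅x, s⁆ ∈ T) :
    ∀ h ∈ closure S, ⁅x, h⁆ ∈ T := by
  intro h hh
  induction hh using closure_induction with
  | mem s hs => exact hgen s hs
  | one => simpa using T.one_mem
  | mul p q hp hq ihp ihq =>
    rw [comm_mul_right, conj_eq_of_commute (hcen q hq p hp)]
    exact T.mul_mem ihp ihq
  | inv p hp ihp =>
    rw [comm_inv_right]
    have hc : Commute p⁻¹ ⁅x,p⁆⁻¹ := ((hcen p hp p hp).inv_left).inv_right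
    have := conj_eq_of_commute hc
    rw [inv_inv] at this
    rw [this]
    exact T.inv_mem ihp

/-- Two-sided version. -/
lemma comm_closure_mem₂ {S₁ S₂ : Set G} {T : Subgroup G}
    (hcen₁ : ∀ p ∈ closure S₂, ∀ h ∈ closure S₁, ∀ g ∈ closure S₁, Commute g ⁅p, h⁆)
    (hcen₂ : ∀ p ∈ closure S₁, ∀ h ∈ closure S₂, ∀ g ∈ closure S₂, Commute g ⁅p, h⁆)
    (hgen : ∀ s ∈ S₁, ∀ t ∈ S₂, ⁅s,t⁆ ∈ T) :
    ∀ p ∈ closure S₁, ∀ q ∈ closure S₂, ⁅p,q⁆ ∈ T := by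
  have step1 : ∀ t ∈ S₂, ∀ p ∈ closure S₁, ⁅p, t⁆ ∈ T := by
    intro t ht p hp
    have h2 : ∀ s ∈ S₁, ⁅t, s⁆ ∈ T := by
      intro s hs
      have : ⁅t,s⁆ = ⁅s,t⁆⁻¹ := (commutatorElement_inv s t).symm
      rw [this]
      exact T.inv_mem (hgen s hs t ht)
    have := comm_closure_mem (hcen₁ t (subset_closure ht)) h2 p hp
    have h3 : ⁅p,t⁆ = ⁅t,p⁆⁻¹ := (commutatorElement_inv t p).symm
    rw [h3]
    exact T.inv_mem this
  intro p hp q hq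
  exact comm_closure_mem (hcen₂ p hp) (fun t ht => step1 t ht p hp) q hq

lemma map_lcs_le {G H : Type*} [Group G] [Group H] (f : G →* H) (n : ℕ) :
    Subgroup.map f (Subgroup.lowerCentralSeries (⊤ : Subgroup G) n) ≤ Subgroup.lowerCentralSeries (⊤ : Subgroup H) n :=
  Subgroup.lowerCentralSeries.map f n

lemma lcs_succ' (G : Type*) [Group G] (n : ℕ) :
    Subgroup.lowerCentralSeries (⊤ : Subgroup G) (n+1) = ⁅Subgroup.lowerCentralSeries (⊤ : Subgroup G) n, (⊤ : Subgroup G)⁆ := rfl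

lemma lcs_comm_le : ∀ (n : ℕ) {G : Type*} [Group G] (m : ℕ),
    ⁅Subgroup.lowerCentralSeries (⊤ : Subgroup G) m, Subgroup.lowerCentralSeries (⊤ : Subgroup G) n⁆ ≤ Subgroup.lowerCentralSeries (⊤ : Subgroup G) (m + n + 1) := by
  intro n
  induction n with
  | zero => intro G _ m; exact le_of_eq rfl
  | succ n IH =>
    intro G _ m
    have harith : m + (n+1) + 1 = m + n + 2 := by omega
    rw [harith]
    set N := Subgroup.lowerCentralSeries (⊤ : Subgroup G) (m + n + 2) with hN
    let π := QuotientGroup.mk' N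
    have hker : π.ker = N := QuotientGroup.ker_mk' N
    rw [← hker, ← Subgroup.map_eq_bot_iff]
    rw [Subgroup.map_commutator]
    have hmapsucc : Subgroup.map π (Subgroup.lowerCentralSeries (⊤ : Subgroup G) (n+1))
        = ⁅Subgroup.map π (Subgroup.lowerCentralSeries (⊤ : Subgroup G) n), (⊤ : Subgroup (G ⧸ N))⁆ := by
      rw [lcs_succ' G n, Subgroup.map_commutator,
        Subgroup.map_top_of_surjective π (QuotientGroup.mk'_surjective N)]
    rw [hmapsucc]
    rw [Subgroup.commutator_comm]
    have hbot : Subgroup.map π N = ⊥ := (Subgroup.map_eq_bot_iff N).mpr (le_of_eq hker.symm)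
    apply Subgroup.commutator_commutator_eq_bot_of_rotate
    · -- ⁅⁅⊤, map lcs m⁆, map lcs n⁆ = ⊥
      rw [eq_bot_iff]
      calc ⁅⁅(⊤ : Subgroup (G ⧸ N)), Subgroup.map π (Subgroup.lowerCentralSeries (⊤ : Subgroup G) m)⁆,
            Subgroup.map π (Subgroup.lowerCentralSeries (⊤ : Subgroup G) n)⁆
          ≤ ⁅Subgroup.map π (Subgroup.lowerCentralSeries (⊤ : Subgroup G) (m+1)), Subgroup.map π (Subgroup.lowerCentralSeries (⊤ : Subgroup G) n)⁆ := by
            apply Subgroup.commutator_mono _ le_rfl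
            rw [Subgroup.commutator_comm]
            have e : ⁅Subgroup.map π (Subgroup.lowerCentralSeries (⊤ : Subgroup G) m), (⊤ : Subgroup (G ⧸ N))⁆
                = Subgroup.map π (Subgroup.lowerCentralSeries (⊤ : Subgroup G) (m+1)) := by
              rw [lcs_succ' G m, Subgroup.map_commutator,
                Subgroup.map_top_of_surjective π (QuotientGroup.mk'_surjective N)]
            exact le_of_eq e
        _ = Subgroup.map π ⁅Subgroup.lowerCentralSeries (⊤ : Subgroup G) (m+1), Subgroup.lowerCentralSeries (⊤ : Subgroup G) n⁆ := by
            rw [Subgroup.map_commutator]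
        _ ≤ Subgroup.map π (Subgroup.lowerCentralSeries (⊤ : Subgroup G) (m+1+n+1)) := Subgroup.map_mono (IH (m+1))
        _ ≤ ⊥ := by
            rw [show m+1+n+1 = m+n+2 from by omega]
            exact le_of_eq hbot
    · -- ⁅⁅map lcs m, map lcs n⁆, ⊤⁆ = ⊥
      rw [eq_bot_iff]
      calc ⁅⁅Subgroup.map π (Subgroup.lowerCentralSeries (⊤ : Subgroup G) m), Subgroup.map π (Subgroup.lowerCentralSeries (⊤ : Subgroup G) n)⁆,
            (⊤ : Subgroup (G ⧸ N))⁆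
          ≤ ⁅Subgroup.map π (Subgroup.lowerCentralSeries (⊤ : Subgroup G) (m+n+1)), (⊤ : Subgroup (G ⧸ N))⁆ := by
            apply Subgroup.commutator_mono _ le_rfl
            rw [← Subgroup.map_commutator]
            exact Subgroup.map_mono (IH m)
        _ = Subgroup.map π (Subgroup.lowerCentralSeries (⊤ : Subgroup G) (m+n+2)) := by
            rw [lcs_succ' G (m+n+1), Subgroup.map_commutator,
              Subgroup.map_top_of_surjective π (QuotientGroup.mk'_surjective N)]
        _ ≤ ⊥ := le_of_eq hbot


section Hall
open Subgroup

variable {X : Type*} [LinearOrder X] [Fintype X]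

/-- Values of basic commutators of weight `w`. -/
def Bvals (X : Type*) [LinearOrder X] (w : ℕ) : Set (FreeGroup X) :=
  {g | ∃ c : FC X, c.IsBasic ∧ c.wt = w ∧ g = c.val}

/-- The target subgroup for weight-`w` elements. -/
def Kw (X : Type*) [LinearOrder X] (w : ℕ) : Subgroup (FreeGroup X) :=
  Subgroup.closure (Bvals X w) ⊔ Subgroup.lowerCentralSeries (⊤ : Subgroup (FreeGroup X)) w

lemma val_mem_lcs (c : FC X) :
    c.val ∈ Subgroup.lowerCentralSeries (⊤ : Subgroup (FreeGroup X)) (c.wt - 1) := by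
  induction c with
  | of x =>
    show FreeGroup.of x ∈ Subgroup.lowerCentralSeries (⊤ : Subgroup (FreeGroup X)) 0
    simp
  | comm a b iha ihb =>
    have ha := FC.wt_pos a; have hb := FC.wt_pos b
    have harith : (a.wt - 1) + (b.wt - 1) + 1 = (FC.comm a b).wt - 1 := by
      rw [FC.wt_comm]; omega
    have := lcs_comm_le (b.wt - 1) (a.wt - 1)
      (Subgroup.commutator_mem_commutator iha ihb)
    rwa [harith] at this

lemma val_mem_lcs' {c : FC X} {m : ℕ} (h : m + 1 ≤ c.wt) :
    c.val ∈ Subgroup.lowerCentralSeries (⊤ : Subgroup (FreeGroup X)) m := by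
  have := val_mem_lcs c
  exact Subgroup.lowerCentralSeries_antitone ⊤ (by omega) this

lemma mem_sup_normal_iff {G : Type*} [Group G] {K N : Subgroup G} [N.Normal] {x : G} :
    x ∈ K ⊔ N ↔ QuotientGroup.mk' N x ∈ Subgroup.map (QuotientGroup.mk' N) K := by
  have h : Subgroup.comap (QuotientGroup.mk' N) (Subgroup.map (QuotientGroup.mk' N) K)
      = K ⊔ N := by
    rw [Subgroup.comap_map_eq, QuotientGroup.ker_mk']
  rw [← h]; rfl

lemma mem_mul_of_mem_sup_normal {G : Type*} [Group G] {K L : Subgroup G} [L.Normal] {x : G}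
    (h : x ∈ K ⊔ L) : ∃ k ∈ K, ∃ l ∈ L, x = k * l := by
  have h' : x ∈ (↑(K ⊔ L) : Set G) := h
  rw [Subgroup.mul_normal] at h'
  obtain ⟨k, hk, l, hl, hkl⟩ := h'
  exact ⟨k, hk, l, hl, hkl.symm⟩

theorem hall_main (w : ℕ) :
    (∀ b a : FC X, b.IsBasic → a.IsBasic → b.wt + a.wt = w → FC.cmp a b = .lt →
        ⁅b.val, a.val⁆ ∈ Kw X w)
    ∧ (∀ c : FC X, c.wt = w → c.val ∈ Kw X w) := by
  induction w using Nat.strong_induction_on with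
  | _ w IHw =>
  set N : Subgroup (FreeGroup X) := Subgroup.lowerCentralSeries (⊤ : Subgroup (FreeGroup X)) w with hNdef
  haveI hNnorm : N.Normal := by rw [hNdef]; infer_instance
  set π : FreeGroup X →* (FreeGroup X ⧸ N) := QuotientGroup.mk' N with hπdef
  have hker : π.ker = N := QuotientGroup.ker_mk' N
  have hsurj : Function.Surjective π := QuotientGroup.mk'_surjective N
  have hNle : ∀ i, w ≤ i → ∀ u ∈ Subgroup.lowerCentralSeries (⊤ : Subgroup (FreeGroup X)) i, π u = 1 := by
    intro i hi u hu
    rw [← MonoidHom.mem_ker, hker, hNdef]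
    exact Subgroup.lowerCentralSeries_antitone ⊤ hi hu
  have hdie : ∀ i j : ℕ, w ≤ i + j + 1 → ∀ u v : FreeGroup X,
      u ∈ Subgroup.lowerCentralSeries (⊤ : Subgroup (FreeGroup X)) i → v ∈ Subgroup.lowerCentralSeries (⊤ : Subgroup (FreeGroup X)) j →
      ⁅π u, π v⁆ = 1 := by
    intro i j hij u v hu hv
    rw [← map_commutatorElement]
    exact hNle _ hij _ (lcs_comm_le j i (Subgroup.commutator_mem_commutator hu hv))
  have hcentral : ∀ i, w ≤ i + 1 → ∀ u ∈ Subgroup.lowerCentralSeries (⊤ : Subgroup (FreeGroup X)) i,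
      ∀ g : FreeGroup X ⧸ N, Commute g (π u) := by
    intro i hi u hu g
    obtain ⟨x, rfl⟩ := hsurj g
    have h1 : ⁅π u, π x⁆ = 1 :=
      hdie i 0 (by omega) u x hu (by simp)
    exact (commutatorElement_eq_one_iff_commute.mp h1).symm
  have hmemT : ∀ g : FreeGroup X, g ∈ Kw X w ↔
      π g ∈ Subgroup.closure (π '' (Bvals X w)) := by
    intro g
    rw [Kw, mem_sup_normal_iff, MonoidHom.map_closure]
  have hBle : ∀ w' : ℕ, Subgroup.closure (π '' (Bvals X w'))
      ≤ Subgroup.map π (Subgroup.lowerCentralSeries (⊤ : Subgroup (FreeGroup X)) (w' - 1)) := by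
    intro w'
    rw [← MonoidHom.map_closure]
    apply Subgroup.map_mono
    rw [Subgroup.closure_le]
    rintro g ⟨c, hc, hwc, rfl⟩
    exact hwc ▸ val_mem_lcs c
  -- basic-constructor helper
  have hbasiccase : ∀ b a : FC X, b.IsBasic → a.IsBasic → b.wt + a.wt = w →
      FC.cmp a b = .lt → (∀ cs ct : FC X, b = .comm cs ct → FC.cmp a ct ≠ .lt) →
      ⁅b.val, a.val⁆ ∈ Kw X w := by
    intro b a hb ha hw hlt hside
    have hbas : FC.IsBasic (FC.comm b a) := FC.IsBasic.comm hb ha hlt hside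
    apply Subgroup.mem_sup_left
    exact Subgroup.subset_closure ⟨FC.comm b a, hbas, by rw [FC.wt_comm]; exact hw, rfl⟩
  -- part (1): products of two basics
  have L2 : ∀ b a : FC X, b.IsBasic → a.IsBasic → b.wt + a.wt = w → FC.cmp a b = .lt →
      ⁅b.val, a.val⁆ ∈ Kw X w := by
    suffices H : ∀ M : ℕ, ∀ b a : FC X, FC.mu X w a < M → b.IsBasic → a.IsBasic →
        b.wt + a.wt = w → FC.cmp a b = .lt → ⁅b.val, a.val⁆ ∈ Kw X w by
      intro b a hb ha hw hlt
      exact H (FC.mu X w a + 1) b a (Nat.lt_succ_self _) hb ha hw hlt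
    intro M
    induction M with
    | zero => intro b a h; exact absurd h (Nat.not_lt_zero _)
    | succ M IHM =>
      intro b a hM hb ha hw hlt
      cases b with
      | of x =>
        have hwa : a.wt = 1 := by
          have h1 := FC.wt_le_of_cmp_lt hlt
          have h2 := FC.wt_pos a
          rw [FC.wt_of] at h1
          omega
        apply hbasiccase _ _ hb ha hw hlt
        intro cs ct h
        cases h
      | comm b1 b2 =>
        by_cases hcmp : FC.cmp a b2 = .lt
        · -- the Jacobi case
          have hb1 : b1.IsBasic := by cases hb with | comm h1 h2 h3 h4 => exact h1
          have hb2 : b2.IsBasic := by cases hb with | comm h1 h2 h3 h4 => exact h2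
          have hlt21 : FC.cmp b2 b1 = .lt := by cases hb with | comm h1 h2 h3 h4 => exact h3
          have hp := FC.wt_pos b1
          have hq := FC.wt_pos b2
          have hr := FC.wt_pos a
          have hqp : b2.wt ≤ b1.wt := FC.wt_le_of_cmp_lt hlt21
          have hwsum : b1.wt + b2.wt + a.wt = w := by
            rw [FC.wt_comm] at hw; omega
          have hab1 : FC.cmp a b1 = .lt := FC.cmp_trans hcmp hlt21
          rw [hmemT]
          have hvalcomm : (FC.comm b1 b2).val = ⁅b1.val, b2.val⁆ := rfl
          -- memberships of values
          have hmx : b1.val ∈ Subgroup.lowerCentralSeries (⊤ : Subgroup (FreeGroup X)) (b1.wt - 1) := val_mem_lcs b1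
          have hmy : b2.val ∈ Subgroup.lowerCentralSeries (⊤ : Subgroup (FreeGroup X)) (b2.wt - 1) := val_mem_lcs b2
          have hmz : a.val ∈ Subgroup.lowerCentralSeries (⊤ : Subgroup (FreeGroup X)) (a.wt - 1) := val_mem_lcs a
          have hmxy : ⁅b1.val, b2.val⁆ ∈
              Subgroup.lowerCentralSeries (⊤ : Subgroup (FreeGroup X)) (b1.wt + b2.wt - 1) := by
            have h0 := lcs_comm_le (b2.wt - 1) (b1.wt - 1)
              (Subgroup.commutator_mem_commutator hmx hmy)
            have harith : b1.wt - 1 + (b2.wt - 1) + 1 = b1.wt + b2.wt - 1 := by omega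
            rwa [harith] at h0
          have hmyz : ⁅b2.val, a.val⁆ ∈
              Subgroup.lowerCentralSeries (⊤ : Subgroup (FreeGroup X)) (b2.wt + a.wt - 1) := by
            have h0 := lcs_comm_le (a.wt - 1) (b2.wt - 1)
              (Subgroup.commutator_mem_commutator hmy hmz)
            have harith : b2.wt - 1 + (a.wt - 1) + 1 = b2.wt + a.wt - 1 := by omega
            rwa [harith] at h0
          have hmzx : ⁅a.val, b1.val⁆ ∈
              Subgroup.lowerCentralSeries (⊤ : Subgroup (FreeGroup X)) (a.wt + b1.wt - 1) := by
            have h0 := lcs_comm_le (b1.wt - 1) (a.wt - 1)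
              (Subgroup.commutator_mem_commutator hmz hmx)
            have harith : a.wt - 1 + (b1.wt - 1) + 1 = a.wt + b1.wt - 1 := by omega
            rwa [harith] at h0
          have hgoal : π ⁅(FC.comm b1 b2).val, a.val⁆
              = ⁅⁅π b1.val, π b2.val⁆, π a.val⁆ := by
            rw [hvalcomm, map_commutatorElement, map_commutatorElement]
          rw [hgoal]
          have hjac : ⁅⁅π b1.val, π b2.val⁆, π a.val⁆
              = ⁅π b2.val, ⁅π a.val, π b1.val⁆⁆ * ⁅π b1.val, ⁅π b2.val, π a.val⁆⁆ := by
            have t1 : ⁅⁅π b1.val, π b2.val⁆, ⁅π b2.val, π a.val⁆⁆ = 1 := by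
              rw [← map_commutatorElement, ← map_commutatorElement]
              exact hdie (b1.wt + b2.wt - 1) (b2.wt + a.wt - 1) (by omega) _ _ hmxy hmyz
            have t2 : ⁅⁅π b2.val, π a.val⁆, ⁅π a.val, π b1.val⁆⁆ = 1 := by
              rw [← map_commutatorElement, ← map_commutatorElement]
              exact hdie (b2.wt + a.wt - 1) (a.wt + b1.wt - 1) (by omega) _ _ hmyz hmzx
            have t3 : ⁅⁅π a.val, π b1.val⁆, ⁅π b1.val, π b2.val⁆⁆ = 1 := by
              rw [← map_commutatorElement, ← map_commutatorElement]
              exact hdie (a.wt + b1.wt - 1) (b1.wt + b2.wt - 1) (by omega) _ _ hmzx hmxy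
            have c1 : Commute ⁅π b2.val, π a.val⁆ ⁅⁅π b1.val, π b2.val⁆, π a.val⁆ := by
              have hm : ⁅⁅b1.val, b2.val⁆, a.val⁆ ∈ Subgroup.lowerCentralSeries (⊤ : Subgroup (FreeGroup X)) (w-1) := by
                have h0 := lcs_comm_le (a.wt - 1) (b1.wt + b2.wt - 1)
                  (Subgroup.commutator_mem_commutator hmxy hmz)
                have harith : b1.wt + b2.wt - 1 + (a.wt - 1) + 1 = w - 1 := by omega
                rwa [harith] at h0
              have h0 := hcentral (w-1) (by omega) _ hm ⁅π b2.val, π a.val⁆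
              rwa [map_commutatorElement, map_commutatorElement] at h0
            have c2 : Commute ⁅π a.val, π b1.val⁆ ⁅⁅π b2.val, π a.val⁆, π b1.val⁆ := by
              have hm : ⁅⁅b2.val, a.val⁆, b1.val⁆ ∈ Subgroup.lowerCentralSeries (⊤ : Subgroup (FreeGroup X)) (w-1) := by
                have h0 := lcs_comm_le (b1.wt - 1) (b2.wt + a.wt - 1)
                  (Subgroup.commutator_mem_commutator hmyz hmx)
                have harith : b2.wt + a.wt - 1 + (b1.wt - 1) + 1 = w - 1 := by omega
                rwa [harith] at h0
              have h0 := hcentral (w-1) (by omega) _ hm ⁅π a.val, π b1.val⁆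
              rwa [map_commutatorElement, map_commutatorElement] at h0
            have c3 : Commute ⁅π b1.val, π b2.val⁆ ⁅⁅π a.val, π b1.val⁆, π b2.val⁆ := by
              have hm : ⁅⁅a.val, b1.val⁆, b2.val⁆ ∈ Subgroup.lowerCentralSeries (⊤ : Subgroup (FreeGroup X)) (w-1) := by
                have h0 := lcs_comm_le (b2.wt - 1) (a.wt + b1.wt - 1)
                  (Subgroup.commutator_mem_commutator hmzx hmy)
                have harith : a.wt + b1.wt - 1 + (b2.wt - 1) + 1 = w - 1 := by omega
                rwa [harith] at h0
              have h0 := hcentral (w-1) (by omega) _ hm ⁅π b1.val, π b2.val⁆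
              rwa [map_commutatorElement, map_commutatorElement] at h0
            exact jacobi t1 t2 t3 c1 c2 c3
          rw [hjac]
          apply Subgroup.mul_mem
          · -- factor ⁅π b2.val, ⁅π a.val, π b1.val⁆⁆
            have hsub1 : ⁅b1.val, a.val⁆ ∈ Kw X (b1.wt + a.wt) :=
              (IHw (b1.wt + a.wt) (by omega)).1 b1 a hb1 ha rfl hab1
            have hinv : ⁅a.val, b1.val⁆ ∈ Kw X (b1.wt + a.wt) := by
              have : ⁅a.val, b1.val⁆ = ⁅b1.val, a.val⁆⁻¹ :=
                (commutatorElement_inv b1.val a.val).symm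
              rw [this]
              exact (Kw X _).inv_mem hsub1
            haveI : (Subgroup.map π (Subgroup.lowerCentralSeries (⊤ : Subgroup (FreeGroup X)) (b1.wt + a.wt))).Normal :=
              Subgroup.Normal.map inferInstance π hsurj
            have hsub' : π ⁅a.val, b1.val⁆ ∈
                Subgroup.closure (π '' (Bvals X (b1.wt + a.wt))) ⊔
                  Subgroup.map π (Subgroup.lowerCentralSeries (⊤ : Subgroup (FreeGroup X)) (b1.wt + a.wt)) := by
              have h0 := Subgroup.mem_map_of_mem π hinv
              rw [Kw, Subgroup.map_sup, MonoidHom.map_closure] at h0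
              exact h0
            obtain ⟨h1, hh1, s1, hs1, hdec⟩ := mem_mul_of_mem_sup_normal hsub'
            obtain ⟨vs1, hvs1, rfl⟩ := hs1
            have hzx1 : ⁅π a.val, π b1.val⁆ = h1 * π vs1 := by
              rw [← map_commutatorElement, hdec]
            have hys1 : ⁅π b2.val, π vs1⁆ = 1 :=
              hdie (b2.wt - 1) (b1.wt + a.wt) (by omega) _ _ hmy hvs1
            have hred : ⁅π b2.val, ⁅π a.val, π b1.val⁆⁆ = ⁅π b2.val, h1⁆ := by
              rw [hzx1, comm_mul_right_eq hys1]
            rw [hred]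
            refine comm_closure_mem ?_ ?_ h1 hh1
            · intro h' hh' g hg'
              have hh'' := hBle (b1.wt + a.wt) hh'
              obtain ⟨vh, hvh, rfl⟩ := hh''
              have hm : ⁅b2.val, vh⁆ ∈ Subgroup.lowerCentralSeries (⊤ : Subgroup (FreeGroup X)) (w - 1) := by
                have h0 := lcs_comm_le (b1.wt + a.wt - 1) (b2.wt - 1)
                  (Subgroup.commutator_mem_commutator hmy hvh)
                have harith : b2.wt - 1 + (b1.wt + a.wt - 1) + 1 = w - 1 := by omega
                rwa [harith] at h0
              have h0 := hcentral (w-1) (by omega) _ hm g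
              rwa [map_commutatorElement] at h0
            · rintro s ⟨g0, ⟨e, hebas, hewt, rfl⟩, rfl⟩
              cases h' : FC.cmp e b2 with
              | lt =>
                have := FC.wt_le_of_cmp_lt h'
                rw [hewt] at this
                omega
              | eq =>
                rw [FC.eq_of_cmp_eq h', commutatorElement_self]
                exact Subgroup.one_mem _
              | gt =>
                have hb2e : FC.cmp b2 e = .lt := FC.cmp_lt_of_gt h'
                have hmulow : FC.mu X w b2 < M := by
                  have h0 := FC.mu_lt hcmp (show b2.wt < w by omega)
                  omega
                have hmem := IHM e b2 hmulow hebas hb2 (by rw [hewt]; omega) hb2e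
                have hmem' := (hmemT _).mp hmem
                rw [map_commutatorElement] at hmem'
                have e0 : ⁅π b2.val, π e.val⁆ = ⁅π e.val, π b2.val⁆⁻¹ :=
                  (commutatorElement_inv (π e.val) (π b2.val)).symm
                rw [e0]
                exact Subgroup.inv_mem _ hmem'
          · -- factor ⁅π b1.val, ⁅π b2.val, π a.val⁆⁆
            have hsub2 : ⁅b2.val, a.val⁆ ∈ Kw X (b2.wt + a.wt) :=
              (IHw (b2.wt + a.wt) (by omega)).1 b2 a hb2 ha rfl hcmp
            haveI : (Subgroup.map π (Subgroup.lowerCentralSeries (⊤ : Subgroup (FreeGroup X)) (b2.wt + a.wt))).Normal :=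
              Subgroup.Normal.map inferInstance π hsurj
            have hsub' : π ⁅b2.val, a.val⁆ ∈
                Subgroup.closure (π '' (Bvals X (b2.wt + a.wt))) ⊔
                  Subgroup.map π (Subgroup.lowerCentralSeries (⊤ : Subgroup (FreeGroup X)) (b2.wt + a.wt)) := by
              have h0 := Subgroup.mem_map_of_mem π hsub2
              rw [Kw, Subgroup.map_sup, MonoidHom.map_closure] at h0
              exact h0
            obtain ⟨h2, hh2, s2, hs2, hdec⟩ := mem_mul_of_mem_sup_normal hsub'
            obtain ⟨vs2, hvs2, rfl⟩ := hs2
            have hyz2 : ⁅π b2.val, π a.val⁆ = h2 * π vs2 := by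
              rw [← map_commutatorElement, hdec]
            have hxs2 : ⁅π b1.val, π vs2⁆ = 1 :=
              hdie (b1.wt - 1) (b2.wt + a.wt) (by omega) _ _ hmx hvs2
            have hred : ⁅π b1.val, ⁅π b2.val, π a.val⁆⁆ = ⁅π b1.val, h2⁆ := by
              rw [hyz2, comm_mul_right_eq hxs2]
            rw [hred]
            refine comm_closure_mem ?_ ?_ h2 hh2
            · intro h' hh' g hg'
              have hh'' := hBle (b2.wt + a.wt) hh'
              obtain ⟨vh, hvh, rfl⟩ := hh''
              have hm : ⁅b1.val, vh⁆ ∈ Subgroup.lowerCentralSeries (⊤ : Subgroup (FreeGroup X)) (w - 1) := by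
                have h0 := lcs_comm_le (b2.wt + a.wt - 1) (b1.wt - 1)
                  (Subgroup.commutator_mem_commutator hmx hvh)
                have harith : b1.wt - 1 + (b2.wt + a.wt - 1) + 1 = w - 1 := by omega
                rwa [harith] at h0
              have h0 := hcentral (w-1) (by omega) _ hm g
              rwa [map_commutatorElement] at h0
            · rintro s ⟨g0, ⟨f, hfbas, hfwt, rfl⟩, rfl⟩
              cases h' : FC.cmp f b1 with
              | lt =>
                have hmulow : FC.mu X w f < M := by
                  have h1 : FC.cmp a f = .lt := FC.cmp_of_wt_lt (by rw [hfwt]; omega)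
                  have h0 := FC.mu_lt h1 (show f.wt < w by rw [hfwt]; omega)
                  omega
                have hmem := IHM b1 f hmulow hb1 hfbas (by rw [hfwt]; omega) h'
                have hmem' := (hmemT _).mp hmem
                rw [map_commutatorElement] at hmem'
                exact hmem'
              | eq =>
                rw [FC.eq_of_cmp_eq h', commutatorElement_self]
                exact Subgroup.one_mem _
              | gt =>
                have hb1f : FC.cmp b1 f = .lt := FC.cmp_lt_of_gt h'
                have hmulow : FC.mu X w b1 < M := by
                  have h0 := FC.mu_lt hab1 (show b1.wt < w by omega)
                  omega
                have hmem := IHM f b1 hmulow hfbas hb1 (by rw [hfwt]; omega) hb1f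
                have hmem' := (hmemT _).mp hmem
                rw [map_commutatorElement] at hmem'
                have e0 : ⁅π b1.val, π f.val⁆ = ⁅π f.val, π b1.val⁆⁻¹ :=
                  (commutatorElement_inv (π f.val) (π b1.val)).symm
                rw [e0]
                exact Subgroup.inv_mem _ hmem'
        · -- b basic with a ≥ b2 : [b, a] is itself basic
          apply hbasiccase _ _ hb ha hw hlt
          intro cs ct h
          injection h with h1 h2
          subst h1; subst h2
          exact hcmp
  -- part (2): arbitrary formal commutators of weight w
  have L1 : ∀ c : FC X, c.wt = w → c.val ∈ Kw X w := by
    intro c hc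
    cases c with
    | of x =>
      apply Subgroup.mem_sup_left
      exact Subgroup.subset_closure ⟨FC.of x, FC.IsBasic.of x, hc, rfl⟩
    | comm c1 c2 =>
      have h1 := FC.wt_pos c1
      have h2 := FC.wt_pos c2
      have hwsum : c1.wt + c2.wt = w := by rw [FC.wt_comm] at hc; exact hc
      have hK1 : c1.val ∈ Kw X c1.wt := (IHw c1.wt (by omega)).2 c1 rfl
      have hK2 : c2.val ∈ Kw X c2.wt := (IHw c2.wt (by omega)).2 c2 rfl
      rw [hmemT]
      have hvalcomm : (FC.comm c1 c2).val = ⁅c1.val, c2.val⁆ := rfl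
      rw [hvalcomm, map_commutatorElement]
      haveI : (Subgroup.map π (Subgroup.lowerCentralSeries (⊤ : Subgroup (FreeGroup X)) c1.wt)).Normal :=
        Subgroup.Normal.map inferInstance π hsurj
      haveI : (Subgroup.map π (Subgroup.lowerCentralSeries (⊤ : Subgroup (FreeGroup X)) c2.wt)).Normal :=
        Subgroup.Normal.map inferInstance π hsurj
      have hd1 : π c1.val ∈ Subgroup.closure (π '' (Bvals X c1.wt)) ⊔
          Subgroup.map π (Subgroup.lowerCentralSeries (⊤ : Subgroup (FreeGroup X)) c1.wt) := by
        have h0 := Subgroup.mem_map_of_mem π hK1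
        rw [Kw, Subgroup.map_sup, MonoidHom.map_closure] at h0
        exact h0
      have hd2 : π c2.val ∈ Subgroup.closure (π '' (Bvals X c2.wt)) ⊔
          Subgroup.map π (Subgroup.lowerCentralSeries (⊤ : Subgroup (FreeGroup X)) c2.wt) := by
        have h0 := Subgroup.mem_map_of_mem π hK2
        rw [Kw, Subgroup.map_sup, MonoidHom.map_closure] at h0
        exact h0
      obtain ⟨g1, hg1, s1, hs1, hdec1⟩ := mem_mul_of_mem_sup_normal hd1
      obtain ⟨vs1, hvs1, rfl⟩ := hs1
      obtain ⟨g2, hg2, s2, hs2, hdec2⟩ := mem_mul_of_mem_sup_normal hd2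
      obtain ⟨vs2, hvs2, rfl⟩ := hs2
      -- reduce: ⁅π c1.val, π c2.val⁆ = ⁅g1, g2⁆
      have hg2mem : g2 ∈ Subgroup.map π (Subgroup.lowerCentralSeries (⊤ : Subgroup (FreeGroup X)) (c2.wt - 1)) :=
        hBle c2.wt hg2
      obtain ⟨vg2, hvg2, hvg2eq⟩ := hg2mem
      have hg1mem : g1 ∈ Subgroup.map π (Subgroup.lowerCentralSeries (⊤ : Subgroup (FreeGroup X)) (c1.wt - 1)) :=
        hBle c1.wt hg1
      obtain ⟨vg1, hvg1, hvg1eq⟩ := hg1mem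
      have hu2 : π c2.val = π (vg2 * vs2) := by rw [map_mul, hvg2eq, hdec2]
      have hs1kill : ⁅π vs1, π (vg2 * vs2)⁆ = 1 := by
        apply hdie c1.wt (c2.wt - 1) (by omega) _ _ hvs1
        exact Subgroup.mul_mem _ hvg2 (Subgroup.lowerCentralSeries_antitone ⊤ (by omega) hvs2)
      have hstep1 : ⁅π c1.val, π c2.val⁆ = ⁅g1, π c2.val⁆ := by
        rw [hdec1, hu2, comm_mul_left_eq (hu2 ▸ hs1kill)]
      have hs2kill : ⁅g1, π vs2⁆ = 1 := by
        rw [← hvg1eq]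
        exact hdie (c1.wt - 1) c2.wt (by omega) _ _ hvg1 hvs2
      have hstep2 : ⁅g1, π c2.val⁆ = ⁅g1, g2⁆ := by
        rw [hdec2, comm_mul_right_eq hs2kill]
      rw [hstep1, hstep2]
      -- bilinear expansion
      refine comm_closure_mem₂ ?_ ?_ ?_ g1 hg1 g2 hg2
      · intro p hp h hh g hg
        obtain ⟨vp, hvp, rfl⟩ := hBle c2.wt hp
        obtain ⟨vh, hvh, rfl⟩ := hBle c1.wt hh
        have hm : ⁅vp, vh⁆ ∈ Subgroup.lowerCentralSeries (⊤ : Subgroup (FreeGroup X)) (w - 1) := by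
          have h0 := lcs_comm_le (c1.wt - 1) (c2.wt - 1)
            (Subgroup.commutator_mem_commutator hvp hvh)
          have harith : c2.wt - 1 + (c1.wt - 1) + 1 = w - 1 := by omega
          rwa [harith] at h0
        have h0 := hcentral (w-1) (by omega) _ hm g
        rwa [map_commutatorElement] at h0
      · intro p hp h hh g hg
        obtain ⟨vp, hvp, rfl⟩ := hBle c1.wt hp
        obtain ⟨vh, hvh, rfl⟩ := hBle c2.wt hh
        have hm : ⁅vp, vh⁆ ∈ Subgroup.lowerCentralSeries (⊤ : Subgroup (FreeGroup X)) (w - 1) := by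
          have h0 := lcs_comm_le (c2.wt - 1) (c1.wt - 1)
            (Subgroup.commutator_mem_commutator hvp hvh)
          have harith : c1.wt - 1 + (c2.wt - 1) + 1 = w - 1 := by omega
          rwa [harith] at h0
        have h0 := hcentral (w-1) (by omega) _ hm g
        rwa [map_commutatorElement] at h0
      · rintro s ⟨g0, ⟨e, hebas, hewt, rfl⟩, rfl⟩ t ⟨g0', ⟨f, hfbas, hfwt, rfl⟩, rfl⟩
        cases h' : FC.cmp f e with
        | lt =>
          have hmem := L2 e f hebas hfbas (by omega) h'
          have hmem' := (hmemT _).mp hmem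
          rw [map_commutatorElement] at hmem'
          exact hmem'
        | eq =>
          rw [FC.eq_of_cmp_eq h', commutatorElement_self]
          exact Subgroup.one_mem _
        | gt =>
          have hef : FC.cmp e f = .lt := FC.cmp_lt_of_gt h'
          have hmem := L2 f e hfbas hebas (by omega) hef
          have hmem' := (hmemT _).mp hmem
          rw [map_commutatorElement] at hmem'
          have e0 : ⁅π e.val, π f.val⁆ = ⁅π f.val, π e.val⁆⁻¹ :=
            (commutatorElement_inv (π f.val) (π e.val)).symm
          rw [e0]
          exact Subgroup.inv_mem _ hmem'
  exact ⟨L2, L1⟩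

end Hall

section QuotientHelpers
variable {X : Type*} [LinearOrder X] [Fintype X]

lemma q_die (w i j : ℕ) (hij : w ≤ i + j + 1) {u v : FreeGroup X}
    (hu : u ∈ Subgroup.lowerCentralSeries (⊤ : Subgroup (FreeGroup X)) i)
    (hv : v ∈ Subgroup.lowerCentralSeries (⊤ : Subgroup (FreeGroup X)) j) :
    ⁅QuotientGroup.mk' (Subgroup.lowerCentralSeries (⊤ : Subgroup (FreeGroup X)) w) u,
     QuotientGroup.mk' (Subgroup.lowerCentralSeries (⊤ : Subgroup (FreeGroup X)) w) v⁆ = 1 := by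
  rw [← map_commutatorElement]
  have h1 : ⁅u, v⁆ ∈ Subgroup.lowerCentralSeries (⊤ : Subgroup (FreeGroup X)) w :=
    Subgroup.lowerCentralSeries_antitone ⊤ hij (lcs_comm_le j i (Subgroup.commutator_mem_commutator hu hv))
  rw [← QuotientGroup.ker_mk' (Subgroup.lowerCentralSeries (⊤ : Subgroup (FreeGroup X)) w)] at h1
  exact h1

lemma q_central (w i : ℕ) (hi : w ≤ i + 1) {u : FreeGroup X}
    (hu : u ∈ Subgroup.lowerCentralSeries (⊤ : Subgroup (FreeGroup X)) i)
    (g : FreeGroup X ⧸ Subgroup.lowerCentralSeries (⊤ : Subgroup (FreeGroup X)) w) :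
    Commute g (QuotientGroup.mk' (Subgroup.lowerCentralSeries (⊤ : Subgroup (FreeGroup X)) w) u) := by
  obtain ⟨x, rfl⟩ := QuotientGroup.mk'_surjective (Subgroup.lowerCentralSeries (⊤ : Subgroup (FreeGroup X)) w) g
  have h1 := q_die w i 0 (by omega) hu (Subgroup.mem_top x)
  exact (commutatorElement_eq_one_iff_commute.mp h1).symm

lemma q_memT (w : ℕ) (g : FreeGroup X) : g ∈ Kw X w ↔
    QuotientGroup.mk' (Subgroup.lowerCentralSeries (⊤ : Subgroup (FreeGroup X)) w) g ∈
      Subgroup.closure (QuotientGroup.mk' (Subgroup.lowerCentralSeries (⊤ : Subgroup (FreeGroup X)) w) '' (Bvals X w)) := by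
  rw [Kw, mem_sup_normal_iff, MonoidHom.map_closure]

lemma q_Ble (w w' : ℕ) :
    Subgroup.closure (QuotientGroup.mk' (Subgroup.lowerCentralSeries (⊤ : Subgroup (FreeGroup X)) w) '' (Bvals X w'))
      ≤ Subgroup.map (QuotientGroup.mk' (Subgroup.lowerCentralSeries (⊤ : Subgroup (FreeGroup X)) w))
          (Subgroup.lowerCentralSeries (⊤ : Subgroup (FreeGroup X)) (w' - 1)) := by
  rw [← MonoidHom.map_closure]
  apply Subgroup.map_mono
  rw [Subgroup.closure_le]
  rintro g ⟨c, hc, hwc, rfl⟩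
  exact hwc ▸ val_mem_lcs c

lemma Bclosure_le {X : Type*} [LinearOrder X] [Fintype X] {G : Type*} [Group G]
    (φ : FreeGroup X →* G) (m w' : ℕ) (h : w' = m + 1) :
    Subgroup.closure (φ '' (Bvals X w')) ≤
      Subgroup.map φ (Subgroup.lowerCentralSeries (⊤ : Subgroup (FreeGroup X)) m) := by
  rw [← MonoidHom.map_closure]
  apply Subgroup.map_mono
  rw [Subgroup.closure_le]
  rintro g ⟨c, hc, hwc, rfl⟩
  exact val_mem_lcs' (by omega)

theorem hall_gen (w : ℕ) :
    Subgroup.lowerCentralSeries (⊤ : Subgroup (FreeGroup X)) w ≤ Kw X (w + 1) := by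
  induction w with
  | zero =>
    intro g _
    apply Subgroup.mem_sup_left
    have h1 : g ∈ Subgroup.closure (Set.range (FreeGroup.of : X → FreeGroup X)) := by
      rw [FreeGroup.closure_range_of]; trivial
    refine Subgroup.closure_mono ?_ h1
    rintro _ ⟨x, rfl⟩
    exact ⟨FC.of x, FC.IsBasic.of x, rfl, rfl⟩
  | succ w IH =>
    have hsucc : Subgroup.lowerCentralSeries (⊤ : Subgroup (FreeGroup X)) (w+1)
        = ⁅Subgroup.lowerCentralSeries (⊤ : Subgroup (FreeGroup X)) w, (⊤ : Subgroup (FreeGroup X))⁆ := rfl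
    rw [hsucc, Subgroup.commutator_le]
    intro u hu g _
    show ⁅u, g⁆ ∈ Kw X (w+2)
    set π : FreeGroup X →* (FreeGroup X ⧸ Subgroup.lowerCentralSeries (⊤ : Subgroup (FreeGroup X)) (w+2)) :=
      QuotientGroup.mk' (Subgroup.lowerCentralSeries (⊤ : Subgroup (FreeGroup X)) (w+2)) with hπdef
    have hsurj : Function.Surjective π := QuotientGroup.mk'_surjective _
    rw [q_memT, map_commutatorElement]
    haveI : (Subgroup.map π (Subgroup.lowerCentralSeries (⊤ : Subgroup (FreeGroup X)) (w+1))).Normal :=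
      Subgroup.Normal.map inferInstance π hsurj
    have hd1 : π u ∈ Subgroup.closure (π '' (Bvals X (w+1))) ⊔
        Subgroup.map π (Subgroup.lowerCentralSeries (⊤ : Subgroup (FreeGroup X)) (w+1)) := by
      have h0 := Subgroup.mem_map_of_mem π (IH hu)
      rw [Kw, Subgroup.map_sup, MonoidHom.map_closure] at h0
      exact h0
    obtain ⟨h1, hh1, s1, hs1, hdec⟩ := mem_mul_of_mem_sup_normal hd1
    obtain ⟨vs1, hvs1, rfl⟩ := hs1
    have hskill : ⁅π vs1, π g⁆ = 1 :=
      q_die (w+2) (w+1) 0 (by omega) hvs1 (Subgroup.mem_top g)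
    have hstep : ⁅π u, π g⁆ = ⁅h1, π g⁆ := by
      rw [hdec, comm_mul_left_eq hskill]
    rw [hstep]
    have htop : Subgroup.closure (π '' (Set.range (FreeGroup.of : X → FreeGroup X))) = ⊤ := by
      rw [← MonoidHom.map_closure, FreeGroup.closure_range_of,
        Subgroup.map_top_of_surjective _ hsurj]
    refine comm_closure_mem₂ ?_ ?_ ?_ h1 hh1 (π g) (by rw [htop]; trivial)
    · intro p hp h hh g' hg'
      obtain ⟨vp, rfl⟩ := hsurj p
      obtain ⟨vh, hvh, rfl⟩ := q_Ble (w+2) (w+1) hh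
      have hm : ⁅vp, vh⁆ ∈ Subgroup.lowerCentralSeries (⊤ : Subgroup (FreeGroup X)) (w+1) := by
        have h0 := lcs_comm_le (w+1-1) 0 (Subgroup.commutator_mem_commutator (Subgroup.mem_top vp) hvh)
        exact Subgroup.lowerCentralSeries_antitone ⊤ (by omega) h0
      have h0 := q_central (w+2) (w+1) (by omega) hm g'
      rwa [map_commutatorElement] at h0
    · intro p hp h hh g' hg'
      obtain ⟨vp, hvp, rfl⟩ := q_Ble (w+2) (w+1) hp
      obtain ⟨vh, rfl⟩ := hsurj h
      have hm : ⁅vp, vh⁆ ∈ Subgroup.lowerCentralSeries (⊤ : Subgroup (FreeGroup X)) (w+1) := by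
        have h0 := lcs_comm_le 0 (w+1-1) (Subgroup.commutator_mem_commutator hvp (Subgroup.mem_top vh))
        exact Subgroup.lowerCentralSeries_antitone ⊤ (by omega) h0
      have h0 := q_central (w+2) (w+1) (by omega) hm g'
      rwa [map_commutatorElement] at h0
    · rintro s ⟨g0, ⟨c, hcbas, hcwt, rfl⟩, rfl⟩ t ⟨g0', ⟨x, rfl⟩, rfl⟩
      have hofval : (FreeGroup.of x : FreeGroup X) = (FC.of x).val := rfl
      have h0 : (FC.comm c (FC.of x)).val ∈ Kw X (w+2) := by
        apply (hall_main (w+2)).2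
        rw [FC.wt_comm, FC.wt_of, hcwt]
      have h1 := (q_memT (w+2) _).mp h0
      have hvc : (FC.comm c (FC.of x)).val = ⁅c.val, (FC.of x).val⁆ := rfl
      rw [hvc, map_commutatorElement] at h1
      rw [hofval]
      exact h1

end QuotientHelpers

end GroupLemmas

section FinalAssembly

open Subgroup

variable (k t : ℕ) (n : Fin t → ℕ)

set_option maxHeartbeats 2000000 in
theorem statement_1' (k t : ℕ) (n : Fin t → ℕ)
    (c₁ c₂ : ℕ) (hc₂ : 1 ≤ c₂) (hc₁ : c₂ ≤ c₁) :
    gammaComm k t c₁ c₂ ⊔ Hsub k t n c₁ c₂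
      = Subgroup.closure (Aset k t c₁ c₂) ⊔ Hsub k t n c₁ c₂ := by
  -- normality facts
  have hRnorm : (Rsub k t n).Normal := by
    constructor
    intro x hx g
    have h1 : ⁅g, x⁆ ∈ Subgroup.lowerCentralSeries (⊤ : Subgroup (FreeGroup (Fin (k+t)))) 1 := by
      show ⁅g, x⁆ ∈ ⁅Subgroup.lowerCentralSeries (⊤ : Subgroup (FreeGroup (Fin (k+t)))) 0, (⊤ : Subgroup _)⁆
      exact Subgroup.commutator_mem_commutator (Subgroup.mem_top g) (Subgroup.mem_top x)
    have h2 : g * x * g⁻¹ = ⁅g, x⁆ * x := by group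
    rw [h2]
    exact Subgroup.mul_mem _ (Subgroup.mem_sup_left h1) hx
  have hIB : ∀ c, (iterBracket (Rsub k t n) c).Normal := by
    intro c
    induction c with
    | zero => exact hRnorm
    | succ c ih =>
      show (⁅iterBracket (Rsub k t n) c, (⊤ : Subgroup _)⁆).Normal
      haveI := ih
      infer_instance
  haveI := hIB c₁
  haveI := hIB c₂
  haveI hPnorm : (Psub k t n c₁ c₂).Normal := by
    show (⁅iterBracket (Rsub k t n) c₁, Subgroup.lowerCentralSeries (⊤ : Subgroup (FreeGroup (Fin (k + t)))) c₂⁆ ⊔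
      ⁅iterBracket (Rsub k t n) c₂, Subgroup.lowerCentralSeries (⊤ : Subgroup (FreeGroup (Fin (k + t)))) c₁⁆).Normal
    infer_instance
  haveI hHnorm : (Hsub k t n c₁ c₂).Normal := by
    constructor
    intro x hx g
    have hx' : x ∈ Psub k t n c₁ c₂ ⊓
        Subgroup.lowerCentralSeries (⊤ : Subgroup (FreeGroup (Fin (k + t)))) (c₁ + c₂ + 2) := hx
    rw [Subgroup.mem_inf] at hx'
    show g * x * g⁻¹ ∈ Psub k t n c₁ c₂ ⊓ _
    rw [Subgroup.mem_inf]
    exact ⟨hPnorm.conj_mem _ hx'.1 g, (Subgroup.lowerCentralSeries_normal ⊤ _).conj_mem _ hx'.2 g⟩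
  -- lcs is inside the iterated brackets
  have hlcsIB : ∀ c, Subgroup.lowerCentralSeries (⊤ : Subgroup (FreeGroup (Fin (k+t)))) (c+1)
      ≤ iterBracket (Rsub k t n) c := by
    intro c
    induction c with
    | zero => exact le_sup_left
    | succ c ih =>
      show ⁅Subgroup.lowerCentralSeries (⊤ : Subgroup (FreeGroup (Fin (k+t)))) (c+1), ⊤⁆ ≤
        ⁅iterBracket (Rsub k t n) c, ⊤⁆
      exact Subgroup.commutator_mono ih le_rfl
  -- the four kill-facts
  have hH1 : ⁅Subgroup.lowerCentralSeries (⊤ : Subgroup (FreeGroup (Fin (k+t)))) (c₁+1),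
      Subgroup.lowerCentralSeries (⊤ : Subgroup (FreeGroup (Fin (k+t)))) c₂⁆ ≤ Hsub k t n c₁ c₂ := by
    apply le_inf
    · exact le_trans (Subgroup.commutator_mono (hlcsIB c₁) le_rfl) le_sup_left
    · have h0 := lcs_comm_le (G := FreeGroup (Fin (k+t))) c₂ (c₁+1)
      rwa [show c₁ + 1 + c₂ + 1 = c₁ + c₂ + 2 by omega] at h0
  have hH2 : ⁅Subgroup.lowerCentralSeries (⊤ : Subgroup (FreeGroup (Fin (k+t)))) c₁,
      Subgroup.lowerCentralSeries (⊤ : Subgroup (FreeGroup (Fin (k+t)))) (c₂+1)⁆ ≤ Hsub k t n c₁ c₂ := by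
    rw [Subgroup.commutator_comm]
    apply le_inf
    · exact le_trans (Subgroup.commutator_mono (hlcsIB c₂) le_rfl) le_sup_right
    · have h0 := lcs_comm_le (G := FreeGroup (Fin (k+t))) c₁ (c₂+1)
      rwa [show c₂ + 1 + c₁ + 1 = c₁ + c₂ + 2 by omega] at h0
  have hH3 : ⁅Subgroup.lowerCentralSeries (⊤ : Subgroup (FreeGroup (Fin (k+t)))) (c₁+c₂+1),
      Subgroup.lowerCentralSeries (⊤ : Subgroup (FreeGroup (Fin (k+t)))) c₁⁆ ≤ Hsub k t n c₁ c₂ := by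
    apply le_inf
    · refine le_trans (Subgroup.commutator_mono ?_ le_rfl) le_sup_right
      exact le_trans (Subgroup.lowerCentralSeries_antitone ⊤ (by omega)) (hlcsIB c₂)
    · refine le_trans (lcs_comm_le c₁ (c₁+c₂+1)) (Subgroup.lowerCentralSeries_antitone ⊤ (by omega))
  have hH4 : ⁅Subgroup.lowerCentralSeries (⊤ : Subgroup (FreeGroup (Fin (k+t)))) (c₁+c₂+1),
      Subgroup.lowerCentralSeries (⊤ : Subgroup (FreeGroup (Fin (k+t)))) c₂⁆ ≤ Hsub k t n c₁ c₂ := by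
    apply le_inf
    · refine le_trans (Subgroup.commutator_mono ?_ le_rfl) le_sup_left
      exact le_trans (Subgroup.lowerCentralSeries_antitone ⊤ (by omega)) (hlcsIB c₁)
    · refine le_trans (lcs_comm_le c₂ (c₁+c₂+1)) (Subgroup.lowerCentralSeries_antitone ⊤ (by omega))
  -- quotient setup
  set π : FreeGroup (Fin (k+t)) →* (FreeGroup (Fin (k+t)) ⧸ Hsub k t n c₁ c₂) :=
    QuotientGroup.mk' (Hsub k t n c₁ c₂) with hπdef
  have hsurj : Function.Surjective π := QuotientGroup.mk'_surjective _
  have hkill : ∀ {u v : FreeGroup (Fin (k+t))}, ⁅u, v⁆ ∈ Hsub k t n c₁ c₂ →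
      ⁅π u, π v⁆ = 1 := by
    intro u v huv
    rw [← map_commutatorElement]
    rw [← QuotientGroup.ker_mk' (Hsub k t n c₁ c₂)] at huv
    exact huv
  apply le_antisymm
  · -- hard direction
    apply sup_le _ le_sup_right
    show ⁅Subgroup.lowerCentralSeries (⊤ : Subgroup (FreeGroup (Fin (k+t)))) c₁,
        Subgroup.lowerCentralSeries (⊤ : Subgroup (FreeGroup (Fin (k+t)))) c₂⁆ ≤
      Subgroup.closure (Aset k t c₁ c₂) ⊔ Hsub k t n c₁ c₂
    rw [Subgroup.commutator_le]
    intro g₁ hg₁ g₂ hg₂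
    rw [mem_sup_normal_iff, MonoidHom.map_closure, map_commutatorElement]
    -- decompose via the Hall basis generation theorem
    haveI : (Subgroup.map π (Subgroup.lowerCentralSeries (⊤ : Subgroup (FreeGroup (Fin (k+t)))) (c₁+1))).Normal :=
      Subgroup.Normal.map inferInstance π hsurj
    haveI : (Subgroup.map π (Subgroup.lowerCentralSeries (⊤ : Subgroup (FreeGroup (Fin (k+t)))) (c₂+1))).Normal :=
      Subgroup.Normal.map inferInstance π hsurj
    have hd1 : π g₁ ∈ Subgroup.closure (π '' (Bvals (Fin (k+t)) (c₁+1))) ⊔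
        Subgroup.map π (Subgroup.lowerCentralSeries (⊤ : Subgroup (FreeGroup (Fin (k+t)))) (c₁+1)) := by
      have h0 := Subgroup.mem_map_of_mem π (hall_gen c₁ hg₁)
      rw [Kw, Subgroup.map_sup, MonoidHom.map_closure] at h0
      exact h0
    have hd2 : π g₂ ∈ Subgroup.closure (π '' (Bvals (Fin (k+t)) (c₂+1))) ⊔
        Subgroup.map π (Subgroup.lowerCentralSeries (⊤ : Subgroup (FreeGroup (Fin (k+t)))) (c₂+1)) := by
      have h0 := Subgroup.mem_map_of_mem π (hall_gen c₂ hg₂)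
      rw [Kw, Subgroup.map_sup, MonoidHom.map_closure] at h0
      exact h0
    obtain ⟨b, hb, z, hz, hdec1⟩ := mem_mul_of_mem_sup_normal hd1
    obtain ⟨vz, hvz, rfl⟩ := hz
    obtain ⟨a, ha, w', hw', hdec2⟩ := mem_mul_of_mem_sup_normal hd2
    obtain ⟨vw, hvw, rfl⟩ := hw'
    obtain ⟨vb, hvb, rfl⟩ := Bclosure_le π c₁ (c₁+1) rfl hb
    obtain ⟨va, hva, rfl⟩ := Bclosure_le π c₂ (c₂+1) rfl ha
    have h1 : ⁅π g₁, π g₂⁆ = ⁅π vb, π g₂⁆ := by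
      rw [hdec1]
      exact comm_mul_left_eq (hkill (hH1 (Subgroup.commutator_mem_commutator hvz hg₂)))
    have h2 : ⁅π vb, π g₂⁆ = ⁅π vb, π va⁆ := by
      rw [hdec2]
      exact comm_mul_right_eq (hkill (hH2 (Subgroup.commutator_mem_commutator hvb hvw)))
    rw [h1, h2]
    -- bilinear expansion with target the closure of the image of Aset
    refine comm_closure_mem₂ ?_ ?_ ?_ (π vb) hb (π va) ha
    · -- centralizing 1
      intro p hp h hh g hg
      obtain ⟨vp, hvp, rfl⟩ := Bclosure_le π c₂ (c₂+1) rfl hp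
      obtain ⟨vh, hvh, rfl⟩ := Bclosure_le π c₁ (c₁+1) rfl hh
      obtain ⟨vg, hvg, rfl⟩ := Bclosure_le π c₁ (c₁+1) rfl hg
      have hm : ⁅vp, vh⁆ ∈ Subgroup.lowerCentralSeries (⊤ : Subgroup (FreeGroup (Fin (k+t)))) (c₁+c₂+1) := by
        have h0 := lcs_comm_le c₁ c₂ (Subgroup.commutator_mem_commutator hvp hvh)
        rwa [show c₂ + c₁ + 1 = c₁ + c₂ + 1 by omega] at h0
      have h0 : ⁅π ⁅vp, vh⁆, π vg⁆ = 1 :=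
        hkill (hH3 (Subgroup.commutator_mem_commutator hm hvg))
      have h1 := (commutatorElement_eq_one_iff_commute.mp h0).symm
      rwa [map_commutatorElement] at h1
    · -- centralizing 2
      intro p hp h hh g hg
      obtain ⟨vp, hvp, rfl⟩ := Bclosure_le π c₁ (c₁+1) rfl hp
      obtain ⟨vh, hvh, rfl⟩ := Bclosure_le π c₂ (c₂+1) rfl hh
      obtain ⟨vg, hvg, rfl⟩ := Bclosure_le π c₂ (c₂+1) rfl hg
      have hm : ⁅vp, vh⁆ ∈ Subgroup.lowerCentralSeries (⊤ : Subgroup (FreeGroup (Fin (k+t)))) (c₁+c₂+1) :=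
        lcs_comm_le c₂ c₁ (Subgroup.commutator_mem_commutator hvp hvh)
      have h0 : ⁅π ⁅vp, vh⁆, π vg⁆ = 1 :=
        hkill (hH4 (Subgroup.commutator_mem_commutator hm hvg))
      have h1 := (commutatorElement_eq_one_iff_commute.mp h0).symm
      rwa [map_commutatorElement] at h1
    · -- generators are in the image of Aset
      rintro s ⟨g0, ⟨β, hβbas, hwβ, rfl⟩, rfl⟩ t ⟨g0', ⟨α, hαbas, hwα, rfl⟩, rfl⟩
      cases h' : FC.cmp α β with
      | lt =>
        have e0 : ⁅π β.val, π α.val⁆ = π ⁅β.val, α.val⁆ := (map_commutatorElement _ _ _).symm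
        rw [e0]
        exact Subgroup.subset_closure ⟨⁅β.val, α.val⁆, ⟨β, α, hβbas, hαbas, hwβ, hwα, h', rfl⟩, rfl⟩
      | eq =>
        rw [FC.eq_of_cmp_eq h', commutatorElement_self]
        exact Subgroup.one_mem _
      | gt =>
        have hβα : FC.cmp β α = .lt := FC.cmp_lt_of_gt h'
        have hwle : β.wt ≤ α.wt := FC.wt_le_of_cmp_lt hβα
        rw [hwβ, hwα] at hwle
        have hc12 : c₂ + 1 = c₁ + 1 := by omega
        have e0 : ⁅π β.val, π α.val⁆ = ⁅π α.val, π β.val⁆⁻¹ :=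
          (commutatorElement_inv (π α.val) (π β.val)).symm
        rw [e0]
        apply Subgroup.inv_mem
        have e1 : ⁅π α.val, π β.val⁆ = π ⁅α.val, β.val⁆ := (map_commutatorElement _ _ _).symm
        rw [e1]
        exact Subgroup.subset_closure ⟨⁅α.val, β.val⁆,
          ⟨α, β, hαbas, hβbas, by omega, by omega, hβα, rfl⟩, rfl⟩
  · -- easy direction
    apply sup_le _ le_sup_right
    refine le_trans ?_ le_sup_left
    rw [Subgroup.closure_le]
    rintro g ⟨β, α, hβ, hα, hwβ, hwα, hlt, rfl⟩
    show ⁅β.val, α.val⁆ ∈ ⁅Subgroup.lowerCentralSeries (⊤ : Subgroup (FreeGroup (Fin (k+t)))) c₁,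
      Subgroup.lowerCentralSeries (⊤ : Subgroup (FreeGroup (Fin (k+t)))) c₂⁆
    exact Subgroup.commutator_mem_commutator
      (val_mem_lcs' (by omega)) (val_mem_lcs' (by omega))

end FinalAssembly


/-- With `F/R` the given free presentation of
`G ≅ ℤ^k ⊕ ℤ_{n 0} ⊕ ⋯ ⊕ ℤ_{n (t-1)}` and `1 ≤ c₂ ≤ c₁ ≤ 2c₂`, we have
`[γ_{c₁+1}(F), γ_{c₂+1}(F)] ≡ ⟨A⟩ (mod H)`, i.e. the two subgroups have the same
product with `H`. -/
theorem statement_1 (k t : ℕ) (n : Fin t → ℕ) (hn : ∀ i, 0 < n i)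
    (hdvd : ∀ (i : Fin t) (h : (i : ℕ) + 1 < t), n ⟨(i : ℕ) + 1, h⟩ ∣ n i)
    (c₁ c₂ : ℕ) (hc₂ : 1 ≤ c₂) (hc₁ : c₂ ≤ c₁) (hc : c₁ ≤ 2 * c₂) :
    gammaComm k t c₁ c₂ ⊔ Hsub k t n c₁ c₂
      = Subgroup.closure (Aset k t c₁ c₂) ⊔ Hsub k t n c₁ c₂ :=
  statement_1' k t n c₁ c₂ hc₂ hc₁

end PaperFormal
end

section
/- Let n ≥ 2 be a natural number. The group ℤ_n ⊕ ℤ_n is capable but is not 𝔖_2-capable. -/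
namespace PaperFormal

open Subgroup

open scoped commutatorElement

structure Heis (n : ℕ) where
  x : ZMod n
  y : ZMod n
  z : ZMod n

namespace Heis
variable {n : ℕ}

instance : Mul (Heis n) := ⟨fun p q => ⟨p.x + q.x, p.y + q.y, p.z + q.z + p.x * q.y⟩⟩
instance : One (Heis n) := ⟨⟨0, 0, 0⟩⟩
instance : Inv (Heis n) := ⟨fun p => ⟨-p.x, -p.y, p.x * p.y - p.z⟩⟩

lemma mul_def (p q : Heis n) : p * q = ⟨p.x + q.x, p.y + q.y, p.z + q.z + p.x * q.y⟩ := rfl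
lemma one_def : (1 : Heis n) = ⟨0, 0, 0⟩ := rfl
lemma inv_def (p : Heis n) : p⁻¹ = ⟨-p.x, -p.y, p.x * p.y - p.z⟩ := rfl

instance : Group (Heis n) where
  mul_assoc p q r := by
    simp only [mul_def, mk.injEq]
    refine ⟨by ring, by ring, by ring⟩
  one_mul p := by
    obtain ⟨a, b, c⟩ := p
    simp only [mul_def, one_def, mk.injEq]
    refine ⟨by ring, by ring, by ring⟩
  mul_one p := by
    obtain ⟨a, b, c⟩ := p
    simp only [mul_def, one_def, mk.injEq]
    refine ⟨by ring, by ring, by ring⟩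
  inv_mul_cancel p := by
    simp only [mul_def, inv_def, one_def, mk.injEq]
    refine ⟨by ring, by ring, by ring⟩

def proj : Heis n →* Multiplicative (ZMod n × ZMod n) where
  toFun p := Multiplicative.ofAdd (p.x, p.y)
  map_one' := rfl
  map_mul' _ _ := rfl

lemma proj_surj : Function.Surjective (proj (n := n)) := by
  intro g
  exact ⟨⟨(Multiplicative.toAdd g).1, (Multiplicative.toAdd g).2, 0⟩, rfl⟩

lemma ker_proj : (proj (n := n)).ker = Subgroup.center (Heis n) := by
  ext p
  constructor
  · intro hp
    have h2 : (p.x, p.y) = ((0 : ZMod n), (0 : ZMod n)) := by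
      have : Multiplicative.ofAdd (p.x, p.y) = 1 := hp
      simpa using this
    have hx : p.x = 0 := congrArg Prod.fst h2
    have hy : p.y = 0 := congrArg Prod.snd h2
    rw [Subgroup.mem_center_iff]
    intro q
    rw [mul_def, mul_def]
    simp only [mk.injEq]
    refine ⟨by ring, by ring, by rw [hx, hy]; ring⟩
  · intro hp
    rw [Subgroup.mem_center_iff] at hp
    have h1 := hp ⟨1, 0, 0⟩
    have h2 := hp ⟨0, 1, 0⟩
    rw [mul_def, mul_def] at h1 h2
    simp only [mk.injEq] at h1 h2
    have hy : p.y = 0 := by linear_combination h1.2.2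
    have hx : p.x = 0 := by linear_combination - h2.2.2
    show Multiplicative.ofAdd (p.x, p.y) = 1
    rw [hx, hy]
    rfl

end Heis


lemma deltaWord_two :
    deltaWord 2 = ⁅⁅FreeGroup.of 0, FreeGroup.of 1⁆, ⁅FreeGroup.of 2, FreeGroup.of 3⁆⁆ := by
  show ⁅⁅FreeGroup.of 0, FreeGroup.map _ (FreeGroup.of 0)⁆,
      FreeGroup.map _ ⁅FreeGroup.of 0, FreeGroup.map _ (FreeGroup.of 0)⁆⁆ = _
  rw [map_commutatorElement]
  simp [FreeGroup.map.of]

lemma lift_delta2 {E : Type*} [Group E] (f : ℕ → E) :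
    FreeGroup.lift f (deltaWord 2) = ⁅⁅f 0, f 1⁆, ⁅f 2, f 3⁆⁆ := by
  rw [deltaWord_two, map_commutatorElement, map_commutatorElement, map_commutatorElement]
  simp

theorem not_scap (n : ℕ) (hn : 2 ≤ n) :
    ¬ VCapable {deltaWord 2} (Multiplicative (ZMod n × ZMod n)) := by
  haveI : Fact (1 < n) := ⟨hn⟩
  rintro ⟨E, _inst, φ, hsurj, hker⟩
  -- Step 1: from marginality of kernel elements
  have key1 : ∀ m ∈ φ.ker, ∀ x h k : E, ⁅⁅m, x⁆, ⁅h, k⁆⁆ = 1 := by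
    intro m hm x h k
    have hm' : m ∈ marginalSet {deltaWord 2} E := hker ▸ hm
    have h0 := hm' (deltaWord 2) rfl
      (fun i => if i = 0 then 1 else if i = 1 then x else if i = 2 then h else k) 0
    rw [lift_delta2, lift_delta2] at h0
    simp only [Function.update_self, Function.update_of_ne (by decide : (1:ℕ) ≠ 0),
      Function.update_of_ne (by decide : (2:ℕ) ≠ 0),
      Function.update_of_ne (by decide : (3:ℕ) ≠ 0)] at h0
    norm_num at h0
    simpa using h0
  set D : Subgroup E := commutator E with hDdef
  have hDmem : ∀ x y : E, ⁅x, y⁆ ∈ D := by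
    intro x y
    rw [hDdef, _root_.commutator_def]
    exact commutator_mem_commutator (mem_top x) (mem_top y)
  have hDker : D ≤ φ.ker := by
    rw [hDdef, commutator_eq_closure]
    rw [Subgroup.closure_le]
    rintro g ⟨x, y, rfl⟩
    rw [SetLike.mem_coe, MonoidHom.mem_ker, map_commutatorElement,
      commutatorElement_eq_one_iff_commute]
    exact mul_comm _ _
  set C : Subgroup E := Subgroup.centralizer (D : Set E) with hCdef
  have hC : ∀ m ∈ φ.ker, ∀ x : E, ⁅m, x⁆ ∈ C := by
    intro m hm x
    rw [hCdef, Subgroup.mem_centralizer_iff]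
    intro d hd
    rw [SetLike.mem_coe, hDdef, commutator_eq_closure] at hd
    have : Commute d ⁅m, x⁆ := by
      induction hd using Subgroup.closure_induction with
      | mem g hg =>
        obtain ⟨h, k, rfl⟩ := hg
        exact ((commutatorElement_eq_one_iff_commute).mp (key1 m hm x h k)).symm
      | one => exact Commute.one_left _
      | mul p q _ _ hp hq => exact hp.mul_left hq
      | inv p _ hp => exact hp.inv_left
    exact this
  have hCcomm : ∀ ν ∈ C, ∀ d ∈ D, ν * d = d * ν := by
    intro ν hν d hd
    rw [hCdef, Subgroup.mem_centralizer_iff] at hν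
    exact (hν d hd).symm
  -- generators
  obtain ⟨a, ha⟩ := hsurj (Multiplicative.ofAdd ((1 : ZMod n), (0 : ZMod n)))
  obtain ⟨b, hb⟩ := hsurj (Multiplicative.ofAdd ((0 : ZMod n), (1 : ZMod n)))
  set u : E := ⁅a, b⁆ with hudef
  have huD : u ∈ D := hDmem a b
  have hswap : ∀ ν ∈ C, ∀ t : ℤ, ν * u ^ t = u ^ t * ν := fun ν hν t =>
    hCcomm ν hν (u ^ t) (zpow_mem huD t)
  have hmulform : ∀ (t t' : ℤ) (ν ν' : E), ν ∈ C →
      (u ^ t * ν) * (u ^ t' * ν') = u ^ (t + t') * (ν * ν') := by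
    intro t t' ν ν' hν
    rw [zpow_add]
    calc u ^ t * ν * (u ^ t' * ν') = u ^ t * (ν * u ^ t') * ν' := by group
      _ = u ^ t * (u ^ t' * ν) * ν' := by rw [hswap ν hν t']
      _ = u ^ t * u ^ t' * (ν * ν') := by group
  have hinvform : ∀ (t : ℤ) (ν : E), ν ∈ C → (u ^ t * ν)⁻¹ = u ^ (-t) * ν⁻¹ := by
    intro t ν hν
    rw [mul_inv_rev, ← zpow_neg, hswap ν⁻¹ (inv_mem hν) (-t)]
  set P : E → E → Prop := fun x y => ∃ t : ℤ, ∃ ν, ν ∈ C ∧ ν ∈ D ∧ ⁅x, y⁆ = u ^ t * ν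
    with hPdef
  have Psymm : ∀ x y, P x y → P y x := by
    rintro x y ⟨t, ν, hνC, hνD, he⟩
    refine ⟨-t, ν⁻¹, inv_mem hνC, inv_mem hνD, ?_⟩
    rw [← commutatorElement_inv, he, hinvform t ν hνC]
  have Pone : ∀ y, P 1 y := by
    intro y
    exact ⟨0, 1, one_mem _, one_mem _, by group⟩
  have Pker : ∀ m ∈ φ.ker, ∀ y, P m y := by
    intro m hm y
    exact ⟨0, ⁅m, y⁆, hC m hm y, hDmem m y, by rw [zpow_zero, one_mul]⟩
  have Pab : P a b := ⟨1, 1, one_mem _, one_mem _, by rw [zpow_one, mul_one]⟩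
  have Paa : P a a := ⟨0, 1, one_mem _, one_mem _, by group⟩
  have Pbb : P b b := ⟨0, 1, one_mem _, one_mem _, by group⟩
  have Pmul : ∀ p q r, P p r → P q r → P (p * q) r := by
    rintro p q r ⟨t₁, ν₁, h1C, h1D, he1⟩ ⟨t₂, ν₂, h2C, h2D, he2⟩
    obtain ⟨ν₀, hν₀C, hν₀D, hid⟩ : ∃ ν₀, ν₀ ∈ C ∧ ν₀ ∈ D ∧
        ⁅p * q, r⁆ = ν₀ * ⁅q, r⁆ * ⁅p, r⁆ := by
      refine ⟨⁅p, ⁅q, r⁆⁆, ?_, hDmem _ _, ?_⟩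
      · have : (⁅⁅q, r⁆, p⁆)⁻¹ ∈ C := inv_mem (hC _ (hDker (hDmem q r)) p)
        rwa [commutatorElement_inv] at this
      · simp only [commutatorElement_def]
        group
    refine ⟨t₂ + t₁, ν₀ * ν₂ * ν₁, mul_mem (mul_mem hν₀C h2C) h1C,
      mul_mem (mul_mem hν₀D h2D) h1D, ?_⟩
    rw [hid, he1, he2]
    calc ν₀ * (u ^ t₂ * ν₂) * (u ^ t₁ * ν₁)
        = (u ^ (0 : ℤ) * ν₀) * (u ^ t₂ * ν₂) * (u ^ t₁ * ν₁) := by rw [zpow_zero, one_mul]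
      _ = u ^ ((0 : ℤ) + t₂) * (ν₀ * ν₂) * (u ^ t₁ * ν₁) := by
          rw [hmulform 0 t₂ _ _ hν₀C]
      _ = u ^ (((0 : ℤ) + t₂) + t₁) * (ν₀ * ν₂ * ν₁) := by
          rw [hmulform _ t₁ _ _ (mul_mem hν₀C h2C)]
      _ = u ^ (t₂ + t₁) * (ν₀ * ν₂ * ν₁) := by norm_num
  have Pinv : ∀ p r, P p r → P p⁻¹ r := by
    rintro p r ⟨t, ν, hνC, hνD, he⟩
    obtain ⟨ν₀, hν₀C, hν₀D, hid⟩ : ∃ ν₀, ν₀ ∈ C ∧ ν₀ ∈ D ∧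
        ⁅p⁻¹, r⁆ = ⁅p, r⁆⁻¹ * ν₀ := by
      refine ⟨⁅(⁅p, r⁆⁻¹)⁻¹, p⁻¹⁆, hC _ (hDker (inv_mem (inv_mem (hDmem p r)))) p⁻¹,
        hDmem _ _, ?_⟩
      simp only [commutatorElement_def]
      group
    refine ⟨-t + 0, ν⁻¹ * ν₀, mul_mem (inv_mem hνC) hν₀C,
      mul_mem (inv_mem hνD) hν₀D, ?_⟩
    rw [hid, he, hinvform t ν hνC]
    calc u ^ (-t) * ν⁻¹ * ν₀
        = (u ^ (-t) * ν⁻¹) * (u ^ (0 : ℤ) * ν₀) := by rw [zpow_zero, one_mul]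
      _ = u ^ (-t + 0) * (ν⁻¹ * ν₀) := by rw [hmulform (-t) 0 _ _ (inv_mem hνC)]
  -- generation of E
  have hgen : ∀ x : E, x ∈ Subgroup.closure ({a, b} ∪ (φ.ker : Set E)) := by
    intro x
    set i : ℕ := (Multiplicative.toAdd (φ x)).1.val with hi
    set j : ℕ := (Multiplicative.toAdd (φ x)).2.val with hj
    have hφ : φ (a ^ i * b ^ j) = φ x := by
      rw [map_mul, map_pow, map_pow, ha, hb]
      show Multiplicative.ofAdd ((1 : ZMod n), (0 : ZMod n)) ^ i *
        Multiplicative.ofAdd ((0 : ZMod n), (1 : ZMod n)) ^ j = φ x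
      rw [← ofAdd_nsmul, ← ofAdd_nsmul, ← ofAdd_add]
      have : i • ((1 : ZMod n), (0 : ZMod n)) + j • ((0 : ZMod n), (1 : ZMod n))
          = Multiplicative.toAdd (φ x) := by
        have h1 : i • ((1 : ZMod n), (0 : ZMod n)) = ((i : ZMod n), (0 : ZMod n)) := by
          simp [Prod.ext_iff]
        have h2 : j • ((0 : ZMod n), (1 : ZMod n)) = ((0 : ZMod n), (j : ZMod n)) := by
          simp [Prod.ext_iff]
        rw [h1, h2, Prod.mk_add_mk, add_zero, zero_add, hi, hj,
          ZMod.natCast_val, ZMod.natCast_val, ZMod.cast_id, ZMod.cast_id]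
      rw [this]
      rfl
    have hm : (a ^ i * b ^ j)⁻¹ * x ∈ φ.ker := by
      rw [MonoidHom.mem_ker, map_mul, map_inv, hφ, inv_mul_cancel]
    have hx : x = (a ^ i * b ^ j) * ((a ^ i * b ^ j)⁻¹ * x) := by group
    rw [hx]
    have haS : a ∈ ({a, b} ∪ (φ.ker : Set E)) := Or.inl (Set.mem_insert _ _)
    have hbS : b ∈ ({a, b} ∪ (φ.ker : Set E)) := Or.inl (Set.mem_insert_of_mem _ rfl)
    exact mul_mem (mul_mem (pow_mem (subset_closure haS) i) (pow_mem (subset_closure hbS) j))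
      (subset_closure (Or.inr hm))
  -- base cases for a and b
  have Pbase : ∀ g ∈ ({a, b} ∪ (φ.ker : Set E)), ∀ y ∈ ({a, b} ∪ (φ.ker : Set E)), P g y := by
    rintro g (hg | hg) y hy
    · rcases hy with hy | hy
      · rcases hg with rfl | hg <;> rcases hy with rfl | hy
        · exact Paa
        · rw [Set.mem_singleton_iff] at hy; subst hy; exact Pab
        · rw [Set.mem_singleton_iff] at hg; subst hg; exact Psymm _ _ Pab
        · rw [Set.mem_singleton_iff] at hg hy; subst hg; subst hy; exact Pbb
      · exact Psymm _ _ (Pker y hy g)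
    · exact Pker g hg y
  have PA : ∀ g ∈ ({a, b} ∪ (φ.ker : Set E)), ∀ y : E, P g y := by
    intro g hg y
    induction hgen y using Subgroup.closure_induction with
    | mem z hz => exact Pbase g hg z hz
    | one => exact Psymm _ _ (Pone g)
    | mul p q _ _ hp hq => exact Psymm _ _ (Pmul p q g (Psymm _ _ hp) (Psymm _ _ hq))
    | inv p _ hp => exact Psymm _ _ (Pinv p g (Psymm _ _ hp))
  have Pall : ∀ x y : E, P x y := by
    intro x y
    induction hgen x using Subgroup.closure_induction with
    | mem z hz => exact PA z hz y
    | one => exact Pone y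
    | mul p q _ _ hp hq => exact Pmul p q y hp hq
    | inv p _ hp => exact Pinv p y hp
  -- all delta2 values vanish
  have hδ : ∀ f : ℕ → E, FreeGroup.lift f (deltaWord 2) = 1 := by
    intro f
    rw [lift_delta2, commutatorElement_eq_one_iff_commute]
    obtain ⟨t, ν, hνC, hνD, he⟩ := Pall (f 0) (f 1)
    obtain ⟨s, μ, hμC, hμD, he'⟩ := Pall (f 2) (f 3)
    rw [he, he']
    show _ * _ = _ * _
    rw [hmulform t s ν μ hνC, hmulform s t μ ν hμC, add_comm,
      hCcomm μ hμC ν hνD] -- μ ∈ C, ν ∈ D : μ * ν = ν * μ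
  have hall : ∀ g : E, g ∈ φ.ker := by
    intro g
    rw [← SetLike.mem_coe, hker]
    intro v hv f i
    rw [Set.mem_singleton_iff] at hv
    subst hv
    rw [hδ, hδ]
  obtain ⟨e, he⟩ := hsurj (Multiplicative.ofAdd ((1 : ZMod n), (0 : ZMod n)))
  have h1 : Multiplicative.ofAdd ((1 : ZMod n), (0 : ZMod n)) = 1 := by
    rw [← he]
    exact hall e
  have h2 : ((1 : ZMod n), (0 : ZMod n)) = (0 : ZMod n × ZMod n) := by
    simpa using h1
  exact one_ne_zero (congrArg Prod.fst h2)


/-- For `n ≥ 2`, the group `ℤ_n ⊕ ℤ_n` is capable but is not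
`𝔖₂`-capable. -/
theorem statement_12 (n : ℕ) (hn : 2 ≤ n) :
    Capable (Multiplicative (ZMod n × ZMod n)) ∧
      ¬ VCapable {deltaWord 2} (Multiplicative (ZMod n × ZMod n)) := by
  constructor
  · refine ⟨ULift (Heis n), inferInstance,
      Heis.proj.comp MulEquiv.ulift.toMonoidHom, ?_, ?_⟩
    · exact Heis.proj_surj.comp MulEquiv.ulift.surjective
    · ext x
      rw [MonoidHom.mem_ker, MonoidHom.comp_apply]
      have hx : (MulEquiv.ulift.toMonoidHom x : Heis n) = x.down := rfl
      rw [hx, ← MonoidHom.mem_ker, Heis.ker_proj, Subgroup.mem_center_iff,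
        Subgroup.mem_center_iff]
      constructor
      · intro h g
        exact ULift.ext _ _ (h g.down)
      · intro h g
        have := congrArg ULift.down (h (ULift.up g))
        exact this
  · exact not_scap n hn

end PaperFormal
end

section
/- Let 𝔙 be a variety of groups defined by a set of words V, and let G be a group with V(G) = 1. Let N be a normal subgroup of G, and suppose both Baer invariants 𝔙M(G) and 𝔙M(G/N) are finite. Then the natural homomorphism 𝔙M(G) → 𝔙M(G/N) is injective if and only if |𝔙M(G/N)| = |𝔙M(G)|. -/
namespace PaperFormal

open Subgroup
open scoped commutatorElement

/-- Let `𝔙` be a variety defined by a set of words `V`, let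
`G = F/R` (`F` free) be a group with `V(G) = 1`, and let `N = S/R` be a normal subgroup
of `G`. If both Baer invariants `𝔙M(G)` and `𝔙M(G/N)` are finite, then the natural
homomorphism `𝔙M(G) → 𝔙M(G/N)` is injective if and only if
`|𝔙M(G/N)| = |𝔙M(G)|`. -/
theorem statement_15 {α X : Type*} [DecidableEq α] (V : Set (FreeGroup α))
    (R S : Subgroup (FreeGroup X)) [R.Normal] [S.Normal] (hRS : R ≤ S)
    (hV : verbal V (FreeGroup X ⧸ R) = ⊥)
    (h1 : Finite (BaerInv V R)) (h2 : Finite (BaerInv V S)) :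
    Function.Injective (baerMap V hRS) ↔
      Nat.card (BaerInv V S) = Nat.card (BaerInv V R) := by
  -- Since `V(G) = 1`, the verbal subgroup `V(F)` is contained in `R`.
  have hVF : verbal V (FreeGroup X) ≤ R := by
    rw [verbal, Subgroup.closure_le]
    rintro g ⟨v, hv, f, rfl⟩
    have : (QuotientGroup.mk' R) (FreeGroup.lift f v) =
        FreeGroup.lift ((QuotientGroup.mk' R) ∘ f) v := by
      rw [← MonoidHom.comp_apply]
      congr 1
      ext x
      simp
    have hmem : FreeGroup.lift ((QuotientGroup.mk' R) ∘ f) v ∈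
        verbal V (FreeGroup X ⧸ R) :=
      Subgroup.subset_closure ⟨v, hv, _, rfl⟩
    rw [hV, Subgroup.mem_bot] at hmem
    have h1 : (QuotientGroup.mk' R) (FreeGroup.lift f v) = 1 := this.trans hmem
    simpa [QuotientGroup.eq_one_iff] using h1
  have hEq : R ⊓ verbal V (FreeGroup X) = S ⊓ verbal V (FreeGroup X) := by
    refine le_antisymm (inf_le_inf_right _ hRS) ?_
    intro g hg
    exact ⟨hVF hg.2, hg.2⟩
  -- The natural map is surjective.
  have hsurj : Function.Surjective (baerMap V hRS) := by
    intro y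
    induction y using QuotientGroup.induction_on with
    | H a =>
      refine ⟨QuotientGroup.mk ⟨a.1, by rw [hEq]; exact a.2⟩, ?_⟩
      show ((QuotientGroup.mk' _).comp
        (Subgroup.inclusion (inf_le_inf_right _ hRS))) ⟨a.1, _⟩ = _
      simp only [MonoidHom.comp_apply, QuotientGroup.mk'_apply]
      congr 1
  constructor
  · intro hinj
    exact (Nat.card_eq_of_bijective (baerMap V hRS) ⟨hinj, hsurj⟩).symm
  · intro hcard
    exact ((Nat.bijective_iff_surjective_and_card (baerMap V hRS)).2
      ⟨hsurj, hcard.symm⟩).1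

end PaperFormal
end

section
/- Let 𝔙 be a variety of groups defined by a set of words V, let G be a group, and let N be a normal subgroup of G contained in the marginal subgroup V*(G). Then the natural homomorphism 𝔙M(G) → 𝔙M(G/N) is injective if and only if N ⊆ V**(G), where V**(G) = ∩{ψ(V*(E)) : ψ : E → G a surjective group homomorphism with ker ψ ⊆ V*(E)}. -/
namespace PaperFormal

open Subgroup

open scoped commutatorElement

/-- `V**(G)`: the intersection of the images `ψ(V*(E))` over all surjections
`ψ : E → G` with `ker ψ ⊆ V*(E)`. -/
def VDoubleStar {α : Type*} [DecidableEq α] (V : Set (FreeGroup α)) (G : Type u)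
    [Group G] : Set G :=
  ⋂₀ {s : Set G | ∃ (E : Type u) (_ : Group E) (ψ : E →* G),
    Function.Surjective ψ ∧ (ψ.ker : Set E) ⊆ marginalSet V E ∧
      s = ψ '' marginalSet V E}

section Helpers

variable {α : Type*} [DecidableEq α] {G : Type*} [Group G]

lemma lift_hom {H : Type*} [Group H] (φ : G →* H) (f : α → G) (v : FreeGroup α) :
    φ (FreeGroup.lift f v) = FreeGroup.lift (φ ∘ f) v := by
  have := FreeGroup.ext_hom (φ.comp (FreeGroup.lift f)) (FreeGroup.lift (φ ∘ f)) (by simp)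
  exact DFunLike.congr_fun this v

lemma lift_congr {f g : α → G} {v : FreeGroup α}
    (h : ∀ x ∈ v.toWord.map Prod.fst, f x = g x) :
    FreeGroup.lift f v = FreeGroup.lift g v := by
  conv_lhs => rw [← FreeGroup.mk_toWord (x := v)]
  conv_rhs => rw [← FreeGroup.mk_toWord (x := v)]
  rw [FreeGroup.lift_mk, FreeGroup.lift_mk]
  congr 1
  refine List.map_congr_left ?_
  intro x hx
  have hx1 := h x.1 (List.mem_map_of_mem hx)
  cases hb : x.2 <;> simp [hx1]

lemma one_mem_marginalSet (V : Set (FreeGroup α)) : (1 : G) ∈ marginalSet V G := by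
  intro v hv f i; rw [mul_one, Function.update_eq_self]

lemma mul_mem_marginalSet {V : Set (FreeGroup α)} {a b : G}
    (ha : a ∈ marginalSet V G) (hb : b ∈ marginalSet V G) : a * b ∈ marginalSet V G := by
  intro v hv f i
  have h1 : Function.update f i (f i * (a * b)) =
      Function.update (Function.update f i (f i * a)) i
        (Function.update f i (f i * a) i * b) := by
    rw [Function.update_self, Function.update_idem, mul_assoc]
  rw [h1, hb v hv _ i, ha v hv f i]

lemma lift_mul_marginal {V : Set (FreeGroup α)} {v : FreeGroup α} (hv : v ∈ V)
    (f k : α → G) (hk : ∀ j, k j ∈ marginalSet V G) :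
    FreeGroup.lift (fun j => f j * k j) v = FreeGroup.lift f v := by
  have aux : ∀ s : Finset α,
      FreeGroup.lift (fun j => if j ∈ s then f j * k j else f j) v = FreeGroup.lift f v := by
    intro s
    induction s using Finset.induction_on with
    | empty => simp
    | @insert a s hi ih =>
      have he : (fun j => if j ∈ insert a s then f j * k j else f j) =
          Function.update (fun j => if j ∈ s then f j * k j else f j) a
            ((fun j => if j ∈ s then f j * k j else f j) a * k a) := by
        funext j
        by_cases hj : j = a
        · subst hj
          simp [Function.update_self, hi]
        · simp [Function.update_of_ne hj, Finset.mem_insert, hj]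
      rw [he, hk a v hv _ a, ih]
  rw [← aux (v.toWord.map Prod.fst).toFinset]
  refine lift_congr fun x hx => ?_
  simp [List.mem_toFinset.mpr hx]


lemma KVstar_normal (V : Set (FreeGroup α)) (K : Subgroup G) [hK : K.Normal] :
    (KVstar V K).Normal := by
  constructor
  intro x hx g
  induction hx using Subgroup.closure_induction with
  | mem y hy =>
    obtain ⟨v, hv, f, i, r, hr, rfl⟩ := hy
    apply Subgroup.subset_closure
    refine ⟨v, hv, fun j => g * f j * g⁻¹, i, g * r * g⁻¹, hK.conj_mem r hr g, ?_⟩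
    have h1 := lift_hom (MulAut.conj g).toMonoidHom (Function.update f i (f i * r)) v
    have h2 := lift_hom (MulAut.conj g).toMonoidHom f v
    have h3 : (MulAut.conj g).toMonoidHom ∘ (Function.update f i (f i * r)) =
        Function.update (fun j => g * f j * g⁻¹) i ((g * f i * g⁻¹) * (g * r * g⁻¹)) := by
      funext j
      rcases eq_or_ne j i with rfl | hj
      · simp only [Function.comp_apply, Function.update_self, MulEquiv.coe_toMonoidHom,
          MulAut.conj_apply]
        group
      · simp only [Function.comp_apply, Function.update_of_ne hj, MulEquiv.coe_toMonoidHom,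
          MulAut.conj_apply]
    have h4 : (MulAut.conj g).toMonoidHom ∘ f = fun j => g * f j * g⁻¹ := by
      funext j; simp [MulAut.conj_apply]
    rw [h3] at h1
    rw [h4] at h2
    rw [← h1, ← h2]
    simp only [MulEquiv.coe_toMonoidHom, MulAut.conj_apply]
    group
  | one => simpa using Subgroup.one_mem _
  | mul a b _ _ iha ihb =>
    have : g * (a * b) * g⁻¹ = (g * a * g⁻¹) * (g * b * g⁻¹) := by group
    rw [this]; exact mul_mem iha ihb
  | inv a _ iha =>
    have : g * a⁻¹ * g⁻¹ = (g * a * g⁻¹)⁻¹ := by group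
    rw [this]; exact inv_mem iha

lemma KVstar_le_verbal (V : Set (FreeGroup α)) (K : Subgroup G) :
    KVstar V K ≤ verbal V G := by
  rw [KVstar, Subgroup.closure_le]
  rintro x ⟨v, hv, f, i, r, hr, rfl⟩
  exact mul_mem (Subgroup.subset_closure ⟨v, hv, _, rfl⟩)
    (inv_mem (Subgroup.subset_closure ⟨v, hv, f, rfl⟩))

lemma KVstar_le_ker {H : Type*} [Group H] (V : Set (FreeGroup α)) {K : Subgroup G}
    (φ : G →* H) (h : ∀ r ∈ K, φ r ∈ marginalSet V H) : KVstar V K ≤ φ.ker := by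
  rw [KVstar, Subgroup.closure_le]
  rintro x ⟨v, hv, f, i, r, hr, rfl⟩
  have h1 := lift_hom φ (Function.update f i (f i * r)) v
  have h3 : φ ∘ (Function.update f i (f i * r)) =
      Function.update (φ ∘ f) i ((φ ∘ f) i * φ r) := by
    rw [Function.comp_update, map_mul]; rfl
  rw [h3] at h1
  have hm := h r hr v hv (φ ∘ f) i
  simp only [SetLike.mem_coe, MonoidHom.mem_ker, map_mul, map_inv, h1, hm,
    lift_hom φ f v, mul_inv_cancel]

lemma mk_marginal_of_KVstar {T : Subgroup G} [T.Normal] {V : Set (FreeGroup α)} {r : G}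
    (h : ∀ v ∈ V, ∀ f : α → G, ∀ i,
      FreeGroup.lift (Function.update f i (f i * r)) v * (FreeGroup.lift f v)⁻¹ ∈ T) :
    (QuotientGroup.mk' T r) ∈ marginalSet V (G ⧸ T) := by
  intro v hv fbar i
  choose f hf using fun j => QuotientGroup.mk'_surjective T (fbar j)
  have hfe : (QuotientGroup.mk' T) ∘ f = fbar := funext hf
  have h3 : Function.update fbar i (fbar i * (QuotientGroup.mk' T) r) =
      (QuotientGroup.mk' T) ∘ Function.update f i (f i * r) := by
    rw [Function.comp_update, map_mul, hfe, hf i]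
  rw [h3, ← hfe, ← lift_hom, ← lift_hom]
  have := h v hv f i
  have h4 : (QuotientGroup.mk' T) (FreeGroup.lift (Function.update f i (f i * r)) v *
      (FreeGroup.lift f v)⁻¹) = 1 := by
    rw [← MonoidHom.mem_ker, QuotientGroup.ker_mk']; exact this
  rw [map_mul, map_inv] at h4
  exact mul_inv_eq_one.mp h4

end Helpers

section Main

variable {α : Type*} {X : Type u} [DecidableEq α] (V : Set (FreeGroup α))
variable (R S : Subgroup (FreeGroup X)) [R.Normal] [S.Normal]

lemma KVstar_le_self : KVstar V R ≤ R := by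
  have h := KVstar_le_ker V (QuotientGroup.mk' R) (fun r hr => by
    have h1 : (QuotientGroup.mk' R) r = 1 := by
      rwa [← MonoidHom.mem_ker, QuotientGroup.ker_mk']
    rw [h1]
    exact one_mem_marginalSet V)
  rwa [QuotientGroup.ker_mk'] at h

lemma doublestar_to_le
    (hV : ((S.map (QuotientGroup.mk' R)) : Set (FreeGroup X ⧸ R)) ⊆
      VDoubleStar V (FreeGroup X ⧸ R)) :
    KVstar V S ≤ KVstar V R := by
  haveI : (KVstar V R).Normal := KVstar_normal V R
  have hTR : KVstar V R ≤ R := KVstar_le_self V R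
  set T := KVstar V R with hTdef
  let ψ : (FreeGroup X ⧸ T) →* FreeGroup X ⧸ R :=
    QuotientGroup.map T R (MonoidHom.id _) (by simpa using hTR)
  have hψmk : ∀ x : FreeGroup X, ψ (QuotientGroup.mk x) = QuotientGroup.mk x :=
    fun x => QuotientGroup.map_mk T R (MonoidHom.id _) _ x
  have hsurj : Function.Surjective ψ := by
    intro y
    obtain ⟨x, rfl⟩ := QuotientGroup.mk'_surjective R y
    exact ⟨QuotientGroup.mk x, hψmk x⟩
  have hkerm : ∀ r ∈ R, (QuotientGroup.mk' T) r ∈ marginalSet V (FreeGroup X ⧸ T) := by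
    intro r hr
    apply mk_marginal_of_KVstar
    intro v hv f i
    exact Subgroup.subset_closure ⟨v, hv, f, i, r, hr, rfl⟩
  have hker : (ψ.ker : Set _) ⊆ marginalSet V (FreeGroup X ⧸ T) := by
    intro e he
    obtain ⟨t, rfl⟩ := QuotientGroup.mk'_surjective T e
    have htR : t ∈ R := by
      have h1 : ψ (QuotientGroup.mk t) = 1 := he
      rw [hψmk, QuotientGroup.eq_one_iff] at h1
      exact h1
    exact hkerm t htR
  have hmem : (ψ '' marginalSet V (FreeGroup X ⧸ T)) ∈
      {s : Set (FreeGroup X ⧸ R) | ∃ (E : Type u) (_ : Group E) (ψ : E →* FreeGroup X ⧸ R),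
        Function.Surjective ψ ∧ (ψ.ker : Set E) ⊆ marginalSet V E ∧
          s = ψ '' marginalSet V E} :=
    ⟨FreeGroup X ⧸ T, inferInstance, ψ, hsurj, hker, rfl⟩
  have hfinal : KVstar V S ≤ (QuotientGroup.mk' T).ker := by
    apply KVstar_le_ker
    intro s hs
    have h1 : (QuotientGroup.mk' R s) ∈ VDoubleStar V (FreeGroup X ⧸ R) :=
      hV (by exact_mod_cast Subgroup.mem_map.mpr ⟨s, hs, rfl⟩)
    have h2 : QuotientGroup.mk' R s ∈ ψ '' marginalSet V (FreeGroup X ⧸ T) :=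
      Set.mem_sInter.mp h1 _ hmem
    obtain ⟨m, hm, hms⟩ := h2
    obtain ⟨t, rfl⟩ := QuotientGroup.mk'_surjective T m
    have hr : t⁻¹ * s ∈ R := by
      have h3 : ψ (QuotientGroup.mk' T t) = QuotientGroup.mk' R s := hms
      rw [QuotientGroup.mk'_apply, hψmk] at h3
      have h4 : (QuotientGroup.mk (t⁻¹ * s) : FreeGroup X ⧸ R) = 1 := by
        rw [← QuotientGroup.mk'_apply, map_mul, map_inv,
          show (QuotientGroup.mk' R) t = (QuotientGroup.mk' R) s from h3, inv_mul_cancel]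
      rwa [QuotientGroup.eq_one_iff] at h4
    have hdecomp : QuotientGroup.mk' T s =
        (QuotientGroup.mk' T t) * (QuotientGroup.mk' T (t⁻¹ * s)) := by
      rw [← map_mul, mul_inv_cancel_left]
    rw [hdecomp]
    exact mul_mem_marginalSet hm (hkerm _ hr)
  rwa [QuotientGroup.ker_mk'] at hfinal

lemma le_to_doublestar (hle : KVstar V S ≤ KVstar V R) :
    ((S.map (QuotientGroup.mk' R)) : Set (FreeGroup X ⧸ R)) ⊆
      VDoubleStar V (FreeGroup X ⧸ R) := by
  intro y hy
  rw [SetLike.mem_coe, Subgroup.mem_map] at hy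
  obtain ⟨s, hs, rfl⟩ := hy
  rw [VDoubleStar, Set.mem_sInter]
  rintro t ⟨E, _inst, ψ, hsurj, hker, rfl⟩
  choose e he using fun x : X => hsurj (QuotientGroup.mk' R (FreeGroup.of x))
  set θ : FreeGroup X →* E := FreeGroup.lift e with hθ
  have hψθ : ∀ w, ψ (θ w) = QuotientGroup.mk' R w := by
    have h := FreeGroup.ext_hom (ψ.comp θ) (QuotientGroup.mk' R) (by
      intro a
      simp only [MonoidHom.comp_apply, hθ, FreeGroup.lift_apply_of]
      exact he a)
    intro w
    exact DFunLike.congr_fun h w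
  have hRker : ∀ r ∈ R, θ r ∈ marginalSet V E := by
    intro r hr
    apply hker
    rw [SetLike.mem_coe, MonoidHom.mem_ker, hψθ, ← MonoidHom.mem_ker, QuotientGroup.ker_mk']
    exact hr
  have hθB : KVstar V R ≤ θ.ker := KVstar_le_ker V θ hRker
  refine ⟨θ s, ?_, hψθ s⟩
  intro v hv g i
  choose a ha using fun j => QuotientGroup.mk'_surjective R (ψ (g j))
  set k : α → E := fun j => (θ (a j))⁻¹ * g j with hk
  have hkker : ∀ j, k j ∈ ψ.ker := by
    intro j
    rw [hk, MonoidHom.mem_ker, map_mul, map_inv, hψθ, ha j, inv_mul_cancel]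
  have hkm : ∀ j, k j ∈ marginalSet V E := fun j => hker (hkker j)
  have hθak : ∀ j, θ (a j) * k j = g j := by
    intro j; rw [hk]; exact mul_inv_cancel_left _ _
  set a' : α → FreeGroup X := Function.update a i (a i * s) with ha'
  set k' : α → E := Function.update k i ((θ s)⁻¹ * (k i * θ s)) with hk'
  have hk'm : ∀ j, k' j ∈ marginalSet V E := by
    intro j
    rcases eq_or_ne j i with rfl | hj
    · rw [hk', Function.update_self]
      apply hker
      rw [SetLike.mem_coe,
        show (θ s)⁻¹ * (k j * θ s) = (θ s)⁻¹ * k j * ((θ s)⁻¹)⁻¹ by group]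
      exact (MonoidHom.normal_ker ψ).conj_mem _ (hkker j) _
    · rw [hk', Function.update_of_ne hj]
      exact hkm j
  have heq : Function.update g i (g i * θ s) = fun j => θ (a' j) * k' j := by
    funext j
    rcases eq_or_ne j i with rfl | hj
    · rw [Function.update_self, ha', hk', Function.update_self, Function.update_self,
        map_mul, ← hθak j]
      group
    · rw [Function.update_of_ne hj, ha', hk', Function.update_of_ne hj,
        Function.update_of_ne hj, hθak j]
  have hmid : θ (FreeGroup.lift a' v) = θ (FreeGroup.lift a v) := by
    have hgen : FreeGroup.lift a' v * (FreeGroup.lift a v)⁻¹ ∈ KVstar V S := by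
      apply Subgroup.subset_closure
      exact ⟨v, hv, a, i, s, hs, by rw [ha']⟩
    have h1 : θ (FreeGroup.lift a' v * (FreeGroup.lift a v)⁻¹) = 1 := hθB (hle hgen)
    rw [map_mul, map_inv] at h1
    exact mul_inv_eq_one.mp h1
  calc FreeGroup.lift (Function.update g i (g i * θ s)) v
      = FreeGroup.lift (fun j => θ (a' j) * k' j) v := by rw [heq]
    _ = FreeGroup.lift (fun j => θ (a' j)) v := lift_mul_marginal hv _ k' hk'm
    _ = θ (FreeGroup.lift a' v) := (lift_hom θ a' v).symm
    _ = θ (FreeGroup.lift a v) := hmid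
    _ = FreeGroup.lift (fun j => θ (a j)) v := lift_hom θ a v
    _ = FreeGroup.lift (fun j => θ (a j) * k j) v := (lift_mul_marginal hv _ k hkm).symm
    _ = FreeGroup.lift g v := by rw [funext hθak]

lemma baerMap_inj_iff {α : Type*} {X : Type u} [DecidableEq α] (V : Set (FreeGroup α))
    (R S : Subgroup (FreeGroup X)) [R.Normal] [S.Normal] (hRS : R ≤ S)
    (hB'R : KVstar V S ≤ R) :
    Function.Injective (baerMap (F := FreeGroup X) V hRS) ↔ KVstar V S ≤ KVstar V R := by
  haveI hnB : (KVstar V R).Normal := KVstar_normal V R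
  haveI hnB' : (KVstar V S).Normal := KVstar_normal V S
  set A : Subgroup (FreeGroup X) := R ⊓ verbal V (FreeGroup X) with hA
  set A' : Subgroup (FreeGroup X) := S ⊓ verbal V (FreeGroup X) with hA'
  have hAA' : A ≤ A' := inf_le_inf_right _ hRS
  haveI : ((KVstar V R).subgroupOf A).Normal := hnB.subgroupOf A
  haveI : ((KVstar V S).subgroupOf A').Normal := hnB'.subgroupOf A'
  have nclB : Subgroup.normalClosure
      ((((KVstar V R).subgroupOf A : Subgroup A)) : Set A) = (KVstar V R).subgroupOf A :=
    Subgroup.normalClosure_eq_self _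
  have nclB' : Subgroup.normalClosure
      ((((KVstar V S).subgroupOf A' : Subgroup A')) : Set A') = (KVstar V S).subgroupOf A' :=
    Subgroup.normalClosure_eq_self _
  have hmap : ∀ x : A, baerMap (F := FreeGroup X) V hRS (QuotientGroup.mk x) =
      QuotientGroup.mk (Subgroup.inclusion hAA' x) := fun x => rfl
  constructor
  · intro hinj b hb
    have hbA : b ∈ A := ⟨hB'R hb, KVstar_le_verbal V S hb⟩
    have hbA' : Subgroup.inclusion hAA' (⟨b, hbA⟩ : A) ∈ (KVstar V S).subgroupOf A' := by
      rw [Subgroup.mem_subgroupOf]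
      simpa [Subgroup.coe_inclusion] using hb
    have he : baerMap (F := FreeGroup X) V hRS (QuotientGroup.mk ⟨b, hbA⟩) = 1 := by
      rw [hmap, QuotientGroup.eq_one_iff]
      exact Subgroup.subset_normalClosure hbA'
    have h1 : (QuotientGroup.mk (⟨b, hbA⟩ : A) : BaerInv V R) = 1 := hinj (by
      rw [he, map_one])
    rw [QuotientGroup.eq_one_iff, nclB, Subgroup.mem_subgroupOf] at h1
    exact h1
  · intro hle
    rw [injective_iff_map_eq_one]
    intro x hx
    obtain ⟨a, rfl⟩ := QuotientGroup.mk'_surjective _ x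
    have hx1 : (QuotientGroup.mk (Subgroup.inclusion hAA' a) :
        quotBy A' (KVstar V S)) = 1 := by
      rw [← hmap]
      exact hx
    rw [QuotientGroup.eq_one_iff, nclB', Subgroup.mem_subgroupOf] at hx1
    have hb : (a : FreeGroup X) ∈ KVstar V R := hle (by
      simpa [Subgroup.coe_inclusion] using hx1)
    rw [QuotientGroup.mk'_apply, QuotientGroup.eq_one_iff]
    exact Subgroup.subset_normalClosure (Subgroup.mem_subgroupOf.mpr hb)

end Main

/-- Let `𝔙` be a variety defined by a set of words `V`, let
`G = F/R` (`F` free) be a group, and let `N = S/R` be a normal subgroup of `G`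
contained in the marginal subgroup `V*(G)`. Then the natural homomorphism
`𝔙M(G) → 𝔙M(G/N)` is injective if and only if `N ⊆ V**(G)`. -/
theorem statement_17 {α : Type*} {X : Type u} [DecidableEq α] (V : Set (FreeGroup α))
    (R S : Subgroup (FreeGroup X)) [R.Normal] [S.Normal] (hRS : R ≤ S)
    (hmarg : ((S.map (QuotientGroup.mk' R) : Subgroup (FreeGroup X ⧸ R)) :
        Set (FreeGroup X ⧸ R)) ⊆ marginalSet V (FreeGroup X ⧸ R)) :
    Function.Injective (baerMap V hRS) ↔
      ((S.map (QuotientGroup.mk' R) : Subgroup (FreeGroup X ⧸ R)) :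
        Set (FreeGroup X ⧸ R)) ⊆ VDoubleStar V (FreeGroup X ⧸ R) := by
  have hB'R : KVstar V S ≤ R := by
    have h := KVstar_le_ker V (QuotientGroup.mk' R) (fun s hs =>
      hmarg (by exact_mod_cast Subgroup.mem_map.mpr ⟨s, hs, rfl⟩))
    rwa [QuotientGroup.ker_mk'] at h
  rw [baerMap_inj_iff V R S hRS hB'R]
  exact ⟨le_to_doublestar V R S, doublestar_to_le V R S⟩

end PaperFormal
end
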